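/- arXiv:1806.04940 — 3 statements merged into one kernel-verified Lean document; each statement's English description precedes it below -/
import Mathlib

section
/- (Type P₁) For α, β, γ ∈ ℂ with αβγ ≠ 0, let A(α,β,γ) = ℂ⟨x,y,z⟩/(αxy − βyx, βyz − γzy, γzx − αxz). For α', β', γ' ∈ ℂ with α'β'γ' ≠ 0, the algebras A(α,β,γ) and A(α',β',γ') are isomorphic as graded algebras if and only if there exists a nonzero scalar λ ∈ ℂ such that (α',β',γ') = λ·(σ(α,β,γ)) for some permutation σ of the triple, i.e. (α':β':γ') equals one of (α:β:γ), (α:γ:β), (β:α:γ), (β:γ:α), (γ:α:β), (γ:β:α) as points of ℙ². -/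
noncomputable section

/-- The free algebra `ℂ⟨x,y,z⟩`. -/
abbrev F3 : Type := FreeAlgebra ℂ (Fin 3)

def X : F3 := FreeAlgebra.ι ℂ 0
def Y : F3 := FreeAlgebra.ι ℂ 1
def Z : F3 := FreeAlgebra.ι ℂ 2

/-- The relation identifying the three relators with `0`. -/
def rel3 (f₁ f₂ f₃ : F3) : F3 → F3 → Prop :=
  fun a b => (a = f₁ ∨ a = f₂ ∨ a = f₃) ∧ b = 0

/-- `ℂ⟨x,y,z⟩/(f₁,f₂,f₃)`, the quotient by the two-sided ideal generated by `f₁,f₂,f₃`. -/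
abbrev QuadAlg (f₁ f₂ f₃ : F3) : Type := RingQuot (rel3 f₁ f₂ f₃)

/-- The linear span of the images of `x, y, z` in the quotient. -/
def genSpan (f₁ f₂ f₃ : F3) : Submodule ℂ (QuadAlg f₁ f₂ f₃) :=
  Submodule.span ℂ {RingQuot.mkAlgHom ℂ (rel3 f₁ f₂ f₃) X,
                    RingQuot.mkAlgHom ℂ (rel3 f₁ f₂ f₃) Y,
                    RingQuot.mkAlgHom ℂ (rel3 f₁ f₂ f₃) Z}

/-- Isomorphism of graded algebras: a `ℂ`-algebra isomorphism carrying the span of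
the images of `x,y,z` onto the span of the images of `x,y,z`. -/
def GrIso (f₁ f₂ f₃ g₁ g₂ g₃ : F3) : Prop :=
  ∃ e : QuadAlg f₁ f₂ f₃ ≃ₐ[ℂ] QuadAlg g₁ g₂ g₃,
    Submodule.map e.toLinearMap (genSpan f₁ f₂ f₃) = genSpan g₁ g₂ g₃

namespace TP1

abbrev PP : Type := MvPolynomial (Fin 3) ℂ

def D (c : Fin 3 → ℂ) : PP →ₐ[ℂ] PP := MvPolynomial.aeval (fun i => c i • MvPolynomial.X i)

lemma D_X (c : Fin 3 → ℂ) (i : Fin 3) : D c (MvPolynomial.X i) = c i • MvPolynomial.X i := by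
  simp [D]

lemma D_D (c d : Fin 3 → ℂ) (f : PP) : D c (D d f) = D (fun i => c i * d i) f := by
  have : (D c).comp (D d) = D (fun i => c i * d i) := by
    apply MvPolynomial.algHom_ext
    intro i
    simp [D, smul_smul, mul_comm]
  exact DFunLike.congr_fun this f

def Lop (i : Fin 3) (c : Fin 3 → ℂ) : Module.End ℂ PP :=
  (LinearMap.mulLeft ℂ (MvPolynomial.X i)).comp (D c).toLinearMap

lemma Lop_apply (i : Fin 3) (c : Fin 3 → ℂ) (f : PP) : Lop i c f = MvPolynomial.X i * D c f := rfl

lemma Lop_Lop (i j : Fin 3) (c d : Fin 3 → ℂ) (f : PP) :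
    (Lop i c * Lop j d) f = c j • (MvPolynomial.X i * MvPolynomial.X j * D (fun k => c k * d k) f) := by
  show Lop i c (Lop j d f) = _
  rw [Lop_apply, Lop_apply, map_mul, D_X, D_D]
  rw [smul_mul_assoc, mul_smul_comm, mul_assoc]

lemma Lop_one (i : Fin 3) (c : Fin 3 → ℂ) : Lop i c 1 = MvPolynomial.X i := by
  rw [Lop_apply, map_one, mul_one]

lemma Lop_Lop_one (i j : Fin 3) (c d : Fin 3 → ℂ) :
    (Lop i c * Lop j d) 1 = c j • (MvPolynomial.X i * MvPolynomial.X j) := by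
  rw [Lop_Lop, map_one, mul_one]

/-- scaling vectors for the representation of the quadratic algebra with parameters A B C -/
def cv (A B C : ℂ) : Fin 3 → Fin 3 → ℂ := ![![1, B/A, 1], ![1, 1, C/B], ![A/C, 1, 1]]

def rep (A B C : ℂ) : F3 →ₐ[ℂ] Module.End ℂ PP :=
  FreeAlgebra.lift ℂ (fun i => Lop i (cv A B C i))

lemma rep_gen (A B C : ℂ) (i : Fin 3) : rep A B C (FreeAlgebra.ι ℂ i) = Lop i (cv A B C i) := by
  simp [rep]

lemma Lop_comm_eq (i j : Fin 3) (c d : Fin 3 → ℂ) (s t : ℂ) (hst : s * c j = t * d i) :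
    s • (Lop i c * Lop j d) = t • (Lop j d * Lop i c) := by
  apply LinearMap.ext
  intro f
  show s • ((Lop i c * Lop j d) f) = t • ((Lop j d * Lop i c) f)
  rw [Lop_Lop, Lop_Lop, smul_smul, smul_smul, hst, mul_comm (MvPolynomial.X i),
    show (fun k => c k * d k) = (fun k => d k * c k) from funext fun k => mul_comm _ _]

lemma rep_rel1 (A B C : ℂ) (hA : A ≠ 0) :
    rep A B C (A • (X*Y) - B • (Y*X)) = 0 := by
  have h : A • (Lop 0 (cv A B C 0) * Lop 1 (cv A B C 1))
      = B • (Lop 1 (cv A B C 1) * Lop 0 (cv A B C 0)) := by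
    apply Lop_comm_eq
    show A * (B/A) = B * 1
    field_simp
  simp only [map_sub, map_smul, map_mul, X, Y, rep_gen]
  rw [h, sub_self]

lemma rep_rel2 (A B C : ℂ) (hB : B ≠ 0) :
    rep A B C (B • (Y*Z) - C • (Z*Y)) = 0 := by
  have h : B • (Lop 1 (cv A B C 1) * Lop 2 (cv A B C 2))
      = C • (Lop 2 (cv A B C 2) * Lop 1 (cv A B C 1)) := by
    apply Lop_comm_eq
    show B * (C/B) = C * 1
    field_simp
  simp only [map_sub, map_smul, map_mul, Y, Z, rep_gen]
  rw [h, sub_self]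

lemma rep_rel3 (A B C : ℂ) (hC : C ≠ 0) :
    rep A B C (C • (Z*X) - A • (X*Z)) = 0 := by
  have h : C • (Lop 2 (cv A B C 2) * Lop 0 (cv A B C 0))
      = A • (Lop 0 (cv A B C 0) * Lop 2 (cv A B C 2)) := by
    apply Lop_comm_eq
    show C * (A/C) = A * 1
    field_simp
  simp only [map_sub, map_smul, map_mul, X, Z, rep_gen]
  rw [h, sub_self]

variable (A B C : ℂ)

/-- The representation of the quotient algebra. -/
def Phi (hA : A ≠ 0) (hB : B ≠ 0) (hC : C ≠ 0) :
    QuadAlg (A • (X*Y) - B • (Y*X)) (B • (Y*Z) - C • (Z*Y)) (C • (Z*X) - A • (X*Z))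
      →ₐ[ℂ] Module.End ℂ PP :=
  RingQuot.liftAlgHom ℂ ⟨rep A B C, by
    rintro x y ⟨(rfl | rfl | rfl), rfl⟩
    · rw [rep_rel1 A B C hA, map_zero]
    · rw [rep_rel2 A B C hB, map_zero]
    · rw [rep_rel3 A B C hC, map_zero]⟩

lemma Phi_mk (hA : A ≠ 0) (hB : B ≠ 0) (hC : C ≠ 0) (x : F3) :
    Phi A B C hA hB hC (RingQuot.mkAlgHom ℂ _ x) = rep A B C x :=
  RingQuot.liftAlgHom_mkAlgHom_apply _ _ _ _

section indep

local notation "xq" => RingQuot.mkAlgHom ℂ (rel3 (A • (X*Y) - B • (Y*X)) (B • (Y*Z) - C • (Z*Y)) (C • (Z*X) - A • (X*Z))) X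
local notation "yq" => RingQuot.mkAlgHom ℂ (rel3 (A • (X*Y) - B • (Y*X)) (B • (Y*Z) - C • (Z*Y)) (C • (Z*X) - A • (X*Z))) Y
local notation "zq" => RingQuot.mkAlgHom ℂ (rel3 (A • (X*Y) - B • (Y*X)) (B • (Y*Z) - C • (Z*Y)) (C • (Z*X) - A • (X*Z))) Z

lemma three (hA : A ≠ 0) (hB : B ≠ 0) (hC : C ≠ 0) (p q r : ℂ) (h : p • xq + q • yq + r • zq = 0) :
    p = 0 ∧ q = 0 ∧ r = 0 := by
  have h2 := congrArg (Phi A B C hA hB hC) h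
  simp only [map_add, map_smul, Phi_mk, map_zero] at h2
  have h3 := congrArg (fun (L : Module.End ℂ PP) => L 1) h2
  simp only [LinearMap.add_apply, LinearMap.smul_apply, LinearMap.zero_apply,
    X, Y, Z, rep_gen, Lop_one] at h3
  refine ⟨?_, ?_, ?_⟩
  · have := congrArg (MvPolynomial.coeff (Finsupp.single 0 1)) h3
    simpa [MvPolynomial.coeff_smul, MvPolynomial.coeff_X', Finsupp.single_eq_single_iff] using this
  · have := congrArg (MvPolynomial.coeff (Finsupp.single 1 1)) h3
    simpa [MvPolynomial.coeff_smul, MvPolynomial.coeff_X', Finsupp.single_eq_single_iff] using this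
  · have := congrArg (MvPolynomial.coeff (Finsupp.single 2 1)) h3
    simpa [MvPolynomial.coeff_smul, MvPolynomial.coeff_X', Finsupp.single_eq_single_iff] using this

lemma XXmono (a b : Fin 3) : (MvPolynomial.X a * MvPolynomial.X b : PP)
    = MvPolynomial.monomial (Finsupp.single a 1 + Finsupp.single b 1) 1 := by
  rw [MvPolynomial.X, MvPolynomial.X, MvPolynomial.monomial_mul, one_mul]

lemma nine (hA : A ≠ 0) (hB : B ≠ 0) (hC : C ≠ 0) (k00 k01 k02 k10 k11 k12 k20 k21 k22 : ℂ)
    (h : k00 • (xq * xq) + k01 • (xq * yq) + k02 • (xq * zq)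
       + k10 • (yq * xq) + k11 • (yq * yq) + k12 • (yq * zq)
       + k20 • (zq * xq) + k21 • (zq * yq) + k22 • (zq * zq) = 0) :
    k00 = 0 ∧ k11 = 0 ∧ k22 = 0 ∧
    B * k01 + A * k10 = 0 ∧ C * k12 + B * k21 = 0 ∧ C * k02 + A * k20 = 0 := by
  have h2 := congrArg (Phi A B C hA hB hC) h
  simp only [map_add, map_smul, map_mul, Phi_mk, map_zero] at h2
  have h3 := congrArg (fun (L : Module.End ℂ PP) => L 1) h2
  simp only [LinearMap.add_apply, LinearMap.smul_apply, LinearMap.zero_apply,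
    X, Y, Z, rep_gen, Lop_Lop_one, cv] at h3
  simp only [Matrix.cons_val] at h3
  norm_num [Matrix.vecHead, Matrix.vecTail] at h3
  have c00 := congrArg (MvPolynomial.coeff (Finsupp.single (0:Fin 3) 1 + Finsupp.single 0 1)) h3
  have c11 := congrArg (MvPolynomial.coeff (Finsupp.single (1:Fin 3) 1 + Finsupp.single 1 1)) h3
  have c22 := congrArg (MvPolynomial.coeff (Finsupp.single (2:Fin 3) 1 + Finsupp.single 2 1)) h3
  have c01 := congrArg (MvPolynomial.coeff (Finsupp.single (0:Fin 3) 1 + Finsupp.single 1 1)) h3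
  have c12 := congrArg (MvPolynomial.coeff (Finsupp.single (1:Fin 3) 1 + Finsupp.single 2 1)) h3
  have c02 := congrArg (MvPolynomial.coeff (Finsupp.single (0:Fin 3) 1 + Finsupp.single 2 1)) h3
  simp only [XXmono, MvPolynomial.coeff_add, MvPolynomial.coeff_smul, MvPolynomial.coeff_monomial,
    MvPolynomial.coeff_zero, Finsupp.ext_iff, Finsupp.add_apply, Finsupp.single_apply,
    Fin.forall_fin_succ] at c00 c11 c22 c01 c12 c02
  norm_num [Fin.ext_iff] at c00 c11 c22 c01 c12 c02
  refine ⟨c00, c11, c22, ?_, ?_, ?_⟩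
  · field_simp at c01 ⊢
    linear_combination c01
  · field_simp at c12 ⊢
    linear_combination c12
  · field_simp at c02 ⊢
    linear_combination c02

end indep


lemma mulfac {u v : ℂ} (h : u * v = 0) (hu : u ≠ 0) : v = 0 :=
  (mul_eq_zero.mp h).resolve_left hu

lemma core1 (al be ga alp bep gap a1 a2 a3 b1 b2 b3 c1 c2 c3 : ℂ)
    (hal : al ≠ 0) (hbe : be ≠ 0) (hga : ga ≠ 0)
    (halp : alp ≠ 0) (hbep : bep ≠ 0) (hgap : gap ≠ 0)
    (ha1 : a1 ≠ 0) (hb2 : b2 ≠ 0) (hc3 : c3 ≠ 0)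
    (hdet : a1*b2*c3 - a1*b3*c2 - a2*b1*c3 + a2*b3*c1 + a3*b1*c2 - a3*b2*c1 ≠ 0)
    (E1 : al*a1*b1 - be*a1*b1 = 0)
    (E2 : al*a2*b2 - be*a2*b2 = 0)
    (E3 : al*a3*b3 - be*a3*b3 = 0)
    (E4 : al*bep*a1*b2 - be*alp*a1*b2 + al*alp*a2*b1 - be*bep*a2*b1 = 0)
    (E5 : al*gap*a2*b3 - be*bep*a2*b3 + al*bep*a3*b2 - be*gap*a3*b2 = 0)
    (E6 : al*gap*a1*b3 - be*alp*a1*b3 + al*alp*a3*b1 - be*gap*a3*b1 = 0)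
    (E7 : be*b1*c1 - ga*b1*c1 = 0)
    (E8 : be*b2*c2 - ga*b2*c2 = 0)
    (E9 : be*b3*c3 - ga*b3*c3 = 0)
    (E10 : be*bep*b1*c2 - ga*alp*b1*c2 + be*alp*b2*c1 - ga*bep*b2*c1 = 0)
    (E11 : be*gap*b2*c3 - ga*bep*b2*c3 + be*bep*b3*c2 - ga*gap*b3*c2 = 0)
    (E12 : be*gap*b1*c3 - ga*alp*b1*c3 + be*alp*b3*c1 - ga*gap*b3*c1 = 0)
    (E13 : ga*c1*a1 - al*c1*a1 = 0)
    (E14 : ga*c2*a2 - al*c2*a2 = 0)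
    (E15 : ga*c3*a3 - al*c3*a3 = 0)
    (E16 : ga*bep*c1*a2 - al*alp*c1*a2 + ga*alp*c2*a1 - al*bep*c2*a1 = 0)
    (E17 : ga*gap*c2*a3 - al*bep*c2*a3 + ga*bep*c3*a2 - al*gap*c3*a2 = 0)
    (E18 : ga*gap*c1*a3 - al*alp*c1*a3 + ga*alp*c3*a1 - al*gap*c3*a1 = 0)
    : al * bep = be * alp := by
  by_cases hab : a2 * b1 = 0
  · -- then E4 gives the result
    have h4 : (al*bep - be*alp) * (a1*b2) = 0 := by
      linear_combination E4 + (be*bep - al*alp)*hab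
    have := mulfac (by linear_combination h4 : (a1*b2) * (al*bep - be*alp) = 0) (mul_ne_zero ha1 hb2)
    linear_combination this
  · have ha2 : a2 ≠ 0 := fun hh => hab (by rw [hh]; ring)
    have hb1 : b1 ≠ 0 := fun hh => hab (by rw [hh]; ring)
    have hae : al = be := by
      have := mulfac (by linear_combination E1 : (a1*b1) * (al - be) = 0) (mul_ne_zero ha1 hb1)
      linear_combination this
    by_cases hq : alp = bep
    · rw [hae, hq]
    · exfalso
      have hne : bep - alp ≠ 0 := sub_ne_zero.mpr (Ne.symm hq)
      rw [← hae] at E4 E9 E10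
      have hmab : a1*b2 - a2*b1 = 0 := by
        have h4 : (al * (bep - alp)) * (a1*b2 - a2*b1) = 0 := by linear_combination E4
        exact mulfac h4 (mul_ne_zero hal hne)
      by_cases hg : ga = al
      · rw [hg] at E10 E16
        have hmbc : b1*c2 - b2*c1 = 0 := by
          have h10 : (al * (bep - alp)) * (b1*c2 - b2*c1) = 0 := by linear_combination E10
          exact mulfac h10 (mul_ne_zero hal hne)
        have hmca : c1*a2 - c2*a1 = 0 := by
          have h16 : (al * (bep - alp)) * (c1*a2 - c2*a1) = 0 := by linear_combination E16
          exact mulfac h16 (mul_ne_zero hal hne)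
        exact hdet (by linear_combination c3*hmab + b3*hmca + a3*hmbc)
      · have hga' : ga - al ≠ 0 := sub_ne_zero.mpr hg
        have hc1 : c1 = 0 := by
          have := mulfac (by linear_combination E13 : ((ga - al) * a1) * c1 = 0) (mul_ne_zero hga' ha1)
          exact this
        have hc2 : c2 = 0 := by
          exact mulfac (by linear_combination E14 : ((ga - al) * a2) * c2 = 0) (mul_ne_zero hga' ha2)
        have ha3 : a3 = 0 := by
          exact mulfac (by linear_combination E15 : ((ga - al) * c3) * a3 = 0) (mul_ne_zero hga' hc3)
        have hb3 : b3 = 0 := by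
          exact mulfac (by linear_combination -E9 : (((ga - al) * c3)) * b3 = 0) (mul_ne_zero hga' hc3)
        exact hdet (by linear_combination c3*hmab + (-(a1*c2) + a2*c1)*hb3 + (b1*c2 - b2*c1)*ha3)


lemma coreAll (al be ga alp bep gap a1 a2 a3 b1 b2 b3 c1 c2 c3 : ℂ)
    (hal : al ≠ 0) (hbe : be ≠ 0) (hga : ga ≠ 0)
    (halp : alp ≠ 0) (hbep : bep ≠ 0) (hgap : gap ≠ 0)
    (ha1 : a1 ≠ 0) (hb2 : b2 ≠ 0) (hc3 : c3 ≠ 0)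
    (hdet : a1*b2*c3 - a1*b3*c2 - a2*b1*c3 + a2*b3*c1 + a3*b1*c2 - a3*b2*c1 ≠ 0)    (E1 : al*a1*b1 - be*a1*b1 = 0)
    (E2 : al*a2*b2 - be*a2*b2 = 0)
    (E3 : al*a3*b3 - be*a3*b3 = 0)
    (E4 : al*bep*a1*b2 - be*alp*a1*b2 + al*alp*a2*b1 - be*bep*a2*b1 = 0)
    (E5 : al*gap*a2*b3 - be*bep*a2*b3 + al*bep*a3*b2 - be*gap*a3*b2 = 0)
    (E6 : al*gap*a1*b3 - be*alp*a1*b3 + al*alp*a3*b1 - be*gap*a3*b1 = 0)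
    (E7 : be*b1*c1 - ga*b1*c1 = 0)
    (E8 : be*b2*c2 - ga*b2*c2 = 0)
    (E9 : be*b3*c3 - ga*b3*c3 = 0)
    (E10 : be*bep*b1*c2 - ga*alp*b1*c2 + be*alp*b2*c1 - ga*bep*b2*c1 = 0)
    (E11 : be*gap*b2*c3 - ga*bep*b2*c3 + be*bep*b3*c2 - ga*gap*b3*c2 = 0)
    (E12 : be*gap*b1*c3 - ga*alp*b1*c3 + be*alp*b3*c1 - ga*gap*b3*c1 = 0)
    (E13 : ga*c1*a1 - al*c1*a1 = 0)
    (E14 : ga*c2*a2 - al*c2*a2 = 0)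
    (E15 : ga*c3*a3 - al*c3*a3 = 0)
    (E16 : ga*bep*c1*a2 - al*alp*c1*a2 + ga*alp*c2*a1 - al*bep*c2*a1 = 0)
    (E17 : ga*gap*c2*a3 - al*bep*c2*a3 + ga*bep*c3*a2 - al*gap*c3*a2 = 0)
    (E18 : ga*gap*c1*a3 - al*alp*c1*a3 + ga*alp*c3*a1 - al*gap*c3*a1 = 0)    : al * bep = be * alp ∧ be * gap = ga * bep ∧ ga * alp = al * gap := by
  refine ⟨?_, ?_, ?_⟩
  · exact
    core1 al be ga alp bep gap a1 a2 a3 b1 b2 b3 c1 c2 c3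
      hal hbe hga halp hbep hgap
      ha1 hb2 hc3
      (fun hh => hdet (by linear_combination hh))
      (by linear_combination E1) (by linear_combination E2) (by linear_combination E3)
      (by linear_combination E4) (by linear_combination E5) (by linear_combination E6)
      (by linear_combination E7) (by linear_combination E8) (by linear_combination E9)
      (by linear_combination E10) (by linear_combination E11) (by linear_combination E12)
      (by linear_combination E13) (by linear_combination E14) (by linear_combination E15)
      (by linear_combination E16) (by linear_combination E17) (by linear_combination E18)
  · exact
    core1 be ga al bep gap alp b2 b3 b1 c2 c3 c1 a2 a3 a1
      hbe hga hal hbep hgap halp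
      hb2 hc3 ha1
      (fun hh => hdet (by linear_combination hh))
      (by linear_combination E8) (by linear_combination E9) (by linear_combination E7)
      (by linear_combination E11) (by linear_combination E12) (by linear_combination E10)
      (by linear_combination E14) (by linear_combination E15) (by linear_combination E13)
      (by linear_combination E17) (by linear_combination E18) (by linear_combination E16)
      (by linear_combination E2) (by linear_combination E3) (by linear_combination E1)
      (by linear_combination E5) (by linear_combination E6) (by linear_combination E4)
  · exact
    core1 ga al be gap alp bep c3 c1 c2 a3 a1 a2 b3 b1 b2
      hga hal hbe hgap halp hbep
      hc3 ha1 hb2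
      (fun hh => hdet (by linear_combination hh))
      (by linear_combination E15) (by linear_combination E13) (by linear_combination E14)
      (by linear_combination E18) (by linear_combination E16) (by linear_combination E17)
      (by linear_combination E3) (by linear_combination E1) (by linear_combination E2)
      (by linear_combination E6) (by linear_combination E4) (by linear_combination E5)
      (by linear_combination E9) (by linear_combination E7) (by linear_combination E8)
      (by linear_combination E12) (by linear_combination E10) (by linear_combination E11)


lemma keyScalar (al be ga alp bep gap a1 a2 a3 b1 b2 b3 c1 c2 c3 : ℂ)
    (hal : al ≠ 0) (hbe : be ≠ 0) (hga : ga ≠ 0)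
    (halp : alp ≠ 0) (hbep : bep ≠ 0) (hgap : gap ≠ 0)
    (hdet : a1*b2*c3 - a1*b3*c2 - a2*b1*c3 + a2*b3*c1 + a3*b1*c2 - a3*b2*c1 ≠ 0)
    (E1 : al*a1*b1 - be*a1*b1 = 0)
    (E2 : al*a2*b2 - be*a2*b2 = 0)
    (E3 : al*a3*b3 - be*a3*b3 = 0)
    (E4 : al*bep*a1*b2 - be*alp*a1*b2 + al*alp*a2*b1 - be*bep*a2*b1 = 0)
    (E5 : al*gap*a2*b3 - be*bep*a2*b3 + al*bep*a3*b2 - be*gap*a3*b2 = 0)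
    (E6 : al*gap*a1*b3 - be*alp*a1*b3 + al*alp*a3*b1 - be*gap*a3*b1 = 0)
    (E7 : be*b1*c1 - ga*b1*c1 = 0)
    (E8 : be*b2*c2 - ga*b2*c2 = 0)
    (E9 : be*b3*c3 - ga*b3*c3 = 0)
    (E10 : be*bep*b1*c2 - ga*alp*b1*c2 + be*alp*b2*c1 - ga*bep*b2*c1 = 0)
    (E11 : be*gap*b2*c3 - ga*bep*b2*c3 + be*bep*b3*c2 - ga*gap*b3*c2 = 0)
    (E12 : be*gap*b1*c3 - ga*alp*b1*c3 + be*alp*b3*c1 - ga*gap*b3*c1 = 0)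
    (E13 : ga*c1*a1 - al*c1*a1 = 0)
    (E14 : ga*c2*a2 - al*c2*a2 = 0)
    (E15 : ga*c3*a3 - al*c3*a3 = 0)
    (E16 : ga*bep*c1*a2 - al*alp*c1*a2 + ga*alp*c2*a1 - al*bep*c2*a1 = 0)
    (E17 : ga*gap*c2*a3 - al*bep*c2*a3 + ga*bep*c3*a2 - al*gap*c3*a2 = 0)
    (E18 : ga*gap*c1*a3 - al*alp*c1*a3 + ga*alp*c3*a1 - al*gap*c3*a1 = 0)
    : ∃ l : ℂ, l ≠ 0 ∧ (
        (alp = l*al ∧ bep = l*be ∧ gap = l*ga) ∨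
        (alp = l*al ∧ bep = l*ga ∧ gap = l*be) ∨
        (alp = l*be ∧ bep = l*al ∧ gap = l*ga) ∨
        (alp = l*be ∧ bep = l*ga ∧ gap = l*al) ∨
        (alp = l*ga ∧ bep = l*al ∧ gap = l*be) ∨
        (alp = l*ga ∧ bep = l*be ∧ gap = l*al)) := by
  have hsix : a1*b2*c3 ≠ 0 ∨ a1*b3*c2 ≠ 0 ∨ a2*b1*c3 ≠ 0 ∨ a2*b3*c1 ≠ 0 ∨ a3*b1*c2 ≠ 0 ∨ a3*b2*c1 ≠ 0 := by
    by_contra hcon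
    push_neg at hcon
    obtain ⟨h1,h2,h3,h4,h5,h6⟩ := hcon
    exact hdet (by linear_combination h1 - h2 - h3 + h4 + h5 - h6)
  rcases hsix with hp|hp|hp|hp|hp|hp
  · -- pattern sigma = (1, 2, 3)
    have n1 : a1 ≠ 0 := left_ne_zero_of_mul (left_ne_zero_of_mul hp)
    have n2 : b2 ≠ 0 := right_ne_zero_of_mul (left_ne_zero_of_mul hp)
    have n3 : c3 ≠ 0 := right_ne_zero_of_mul hp
    obtain ⟨G1, G2, G3⟩ :=
      coreAll al be ga alp bep gap a1 a2 a3 b1 b2 b3 c1 c2 c3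
        hal hbe hga halp hbep hgap
        n1 n2 n3
        (fun hh => hdet (by linear_combination hh))
        (by linear_combination E1) (by linear_combination E2) (by linear_combination E3)
        (by linear_combination E4) (by linear_combination E5) (by linear_combination E6)
        (by linear_combination E7) (by linear_combination E8) (by linear_combination E9)
        (by linear_combination E10) (by linear_combination E11) (by linear_combination E12)
        (by linear_combination E13) (by linear_combination E14) (by linear_combination E15)
        (by linear_combination E16) (by linear_combination E17) (by linear_combination E18)
    refine ⟨alp / al, div_ne_zero halp hal, ?_⟩
    have e1 : alp = alp / al * al := by field_simp
    have e2 : bep = alp / al * be := by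
      field_simp
      first
      | linear_combination G1
      | linear_combination -G1
    have e3 : gap = alp / al * ga := by
      field_simp
      first
      | linear_combination G3
      | linear_combination -G3
    exact Or.inl ⟨e1, e2, e3⟩
  · -- pattern sigma = (1, 3, 2)
    have n1 : a1 ≠ 0 := left_ne_zero_of_mul (left_ne_zero_of_mul hp)
    have n2 : b3 ≠ 0 := right_ne_zero_of_mul (left_ne_zero_of_mul hp)
    have n3 : c2 ≠ 0 := right_ne_zero_of_mul hp
    obtain ⟨G1, G2, G3⟩ :=
      coreAll al ga be alp bep gap a1 a2 a3 c1 c2 c3 b1 b2 b3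
        hal hga hbe halp hbep hgap
        n1 n3 n2
        (fun hh => hdet (by linear_combination -hh))
        (by linear_combination -E13) (by linear_combination -E14) (by linear_combination -E15)
        (by linear_combination -E16) (by linear_combination -E17) (by linear_combination -E18)
        (by linear_combination -E7) (by linear_combination -E8) (by linear_combination -E9)
        (by linear_combination -E10) (by linear_combination -E11) (by linear_combination -E12)
        (by linear_combination -E1) (by linear_combination -E2) (by linear_combination -E3)
        (by linear_combination -E4) (by linear_combination -E5) (by linear_combination -E6)
    refine ⟨alp / al, div_ne_zero halp hal, ?_⟩
    have e1 : alp = alp / al * al := by field_simp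
    have e2 : bep = alp / al * ga := by
      field_simp
      first
      | linear_combination G1
      | linear_combination -G1
    have e3 : gap = alp / al * be := by
      field_simp
      first
      | linear_combination G3
      | linear_combination -G3
    exact Or.inr (Or.inl ⟨e1, e2, e3⟩)
  · -- pattern sigma = (2, 1, 3)
    have n1 : a2 ≠ 0 := left_ne_zero_of_mul (left_ne_zero_of_mul hp)
    have n2 : b1 ≠ 0 := right_ne_zero_of_mul (left_ne_zero_of_mul hp)
    have n3 : c3 ≠ 0 := right_ne_zero_of_mul hp
    obtain ⟨G1, G2, G3⟩ :=
      coreAll be al ga alp bep gap b1 b2 b3 a1 a2 a3 c1 c2 c3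
        hbe hal hga halp hbep hgap
        n2 n1 n3
        (fun hh => hdet (by linear_combination -hh))
        (by linear_combination -E1) (by linear_combination -E2) (by linear_combination -E3)
        (by linear_combination -E4) (by linear_combination -E5) (by linear_combination -E6)
        (by linear_combination -E13) (by linear_combination -E14) (by linear_combination -E15)
        (by linear_combination -E16) (by linear_combination -E17) (by linear_combination -E18)
        (by linear_combination -E7) (by linear_combination -E8) (by linear_combination -E9)
        (by linear_combination -E10) (by linear_combination -E11) (by linear_combination -E12)
    refine ⟨alp / be, div_ne_zero halp hbe, ?_⟩
    have e1 : alp = alp / be * be := by field_simp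
    have e2 : bep = alp / be * al := by
      field_simp
      first
      | linear_combination G1
      | linear_combination -G1
    have e3 : gap = alp / be * ga := by
      field_simp
      first
      | linear_combination G3
      | linear_combination -G3
    exact Or.inr (Or.inr (Or.inl ⟨e1, e2, e3⟩))
  · -- pattern sigma = (2, 3, 1)
    have n1 : a2 ≠ 0 := left_ne_zero_of_mul (left_ne_zero_of_mul hp)
    have n2 : b3 ≠ 0 := right_ne_zero_of_mul (left_ne_zero_of_mul hp)
    have n3 : c1 ≠ 0 := right_ne_zero_of_mul hp
    obtain ⟨G1, G2, G3⟩ :=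
      coreAll ga al be alp bep gap c1 c2 c3 a1 a2 a3 b1 b2 b3
        hga hal hbe halp hbep hgap
        n3 n1 n2
        (fun hh => hdet (by linear_combination hh))
        (by linear_combination E13) (by linear_combination E14) (by linear_combination E15)
        (by linear_combination E16) (by linear_combination E17) (by linear_combination E18)
        (by linear_combination E1) (by linear_combination E2) (by linear_combination E3)
        (by linear_combination E4) (by linear_combination E5) (by linear_combination E6)
        (by linear_combination E7) (by linear_combination E8) (by linear_combination E9)
        (by linear_combination E10) (by linear_combination E11) (by linear_combination E12)
    refine ⟨alp / ga, div_ne_zero halp hga, ?_⟩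
    have e1 : alp = alp / ga * ga := by field_simp
    have e2 : bep = alp / ga * al := by
      field_simp
      first
      | linear_combination G1
      | linear_combination -G1
    have e3 : gap = alp / ga * be := by
      field_simp
      first
      | linear_combination G3
      | linear_combination -G3
    exact Or.inr (Or.inr (Or.inr (Or.inr (Or.inl ⟨e1, e2, e3⟩))))
  · -- pattern sigma = (3, 1, 2)
    have n1 : a3 ≠ 0 := left_ne_zero_of_mul (left_ne_zero_of_mul hp)
    have n2 : b1 ≠ 0 := right_ne_zero_of_mul (left_ne_zero_of_mul hp)
    have n3 : c2 ≠ 0 := right_ne_zero_of_mul hp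
    obtain ⟨G1, G2, G3⟩ :=
      coreAll be ga al alp bep gap b1 b2 b3 c1 c2 c3 a1 a2 a3
        hbe hga hal halp hbep hgap
        n2 n3 n1
        (fun hh => hdet (by linear_combination hh))
        (by linear_combination E7) (by linear_combination E8) (by linear_combination E9)
        (by linear_combination E10) (by linear_combination E11) (by linear_combination E12)
        (by linear_combination E13) (by linear_combination E14) (by linear_combination E15)
        (by linear_combination E16) (by linear_combination E17) (by linear_combination E18)
        (by linear_combination E1) (by linear_combination E2) (by linear_combination E3)
        (by linear_combination E4) (by linear_combination E5) (by linear_combination E6)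
    refine ⟨alp / be, div_ne_zero halp hbe, ?_⟩
    have e1 : alp = alp / be * be := by field_simp
    have e2 : bep = alp / be * ga := by
      field_simp
      first
      | linear_combination G1
      | linear_combination -G1
    have e3 : gap = alp / be * al := by
      field_simp
      first
      | linear_combination G3
      | linear_combination -G3
    exact Or.inr (Or.inr (Or.inr (Or.inl ⟨e1, e2, e3⟩)))
  · -- pattern sigma = (3, 2, 1)
    have n1 : a3 ≠ 0 := left_ne_zero_of_mul (left_ne_zero_of_mul hp)
    have n2 : b2 ≠ 0 := right_ne_zero_of_mul (left_ne_zero_of_mul hp)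
    have n3 : c1 ≠ 0 := right_ne_zero_of_mul hp
    obtain ⟨G1, G2, G3⟩ :=
      coreAll ga be al alp bep gap c1 c2 c3 b1 b2 b3 a1 a2 a3
        hga hbe hal halp hbep hgap
        n3 n2 n1
        (fun hh => hdet (by linear_combination -hh))
        (by linear_combination -E7) (by linear_combination -E8) (by linear_combination -E9)
        (by linear_combination -E10) (by linear_combination -E11) (by linear_combination -E12)
        (by linear_combination -E1) (by linear_combination -E2) (by linear_combination -E3)
        (by linear_combination -E4) (by linear_combination -E5) (by linear_combination -E6)
        (by linear_combination -E13) (by linear_combination -E14) (by linear_combination -E15)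
        (by linear_combination -E16) (by linear_combination -E17) (by linear_combination -E18)
    refine ⟨alp / ga, div_ne_zero halp hga, ?_⟩
    have e1 : alp = alp / ga * ga := by field_simp
    have e2 : bep = alp / ga * be := by
      field_simp
      first
      | linear_combination G1
      | linear_combination -G1
    have e3 : gap = alp / ga * al := by
      field_simp
      first
      | linear_combination G3
      | linear_combination -G3
    exact Or.inr (Or.inr (Or.inr (Or.inr (Or.inr ⟨e1, e2, e3⟩))))


end TP1

namespace TP1Back
open TP1

lemma scale_rel {Q : Type} [AddCommGroup Q] [Module ℂ Q] (u v : Q) (l s t : ℂ)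
    (h : s • u - t • v = 0) : (l*s) • u - (l*t) • v = 0 := by
  rw [mul_smul, mul_smul, ← smul_sub, h, smul_zero]

lemma unscale_rel {Q : Type} [AddCommGroup Q] [Module ℂ Q] (u v : Q) (l s t : ℂ) (hl : l ≠ 0)
    (h : (l*s) • u - (l*t) • v = 0) : s • u - t • v = 0 := by
  have h2 := scale_rel u v l⁻¹ _ _ h
  rwa [inv_mul_cancel_left₀ hl, inv_mul_cancel_left₀ hl] at h2

lemma neg_rel {Q : Type} [AddCommGroup Q] [Module ℂ Q] (u v : Q) (s t : ℂ)
    (h : s • u - t • v = 0) : t • v - s • u = 0 := by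
  rw [← neg_sub, h, neg_zero]

def permHom (p : Fin 3 → Fin 3) : F3 →ₐ[ℂ] F3 :=
  FreeAlgebra.lift ℂ (fun i => FreeAlgebra.ι ℂ (p i))

lemma permHom_gen (p : Fin 3 → Fin 3) (i : Fin 3) :
    permHom p (FreeAlgebra.ι ℂ i) = FreeAlgebra.ι ℂ (p i) := by simp [permHom]

lemma mkGrIso (f₁ f₂ f₃ g₁ g₂ g₃ : F3) (p q : Fin 3 → Fin 3)
    (hqp : ∀ i, q (p i) = i) (hpq : ∀ i, p (q i) = i)
    (hset : ({p 0, p 1, p 2} : Set (Fin 3)) = {0, 1, 2})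
    (h1 : RingQuot.mkAlgHom ℂ (rel3 g₁ g₂ g₃) (permHom p f₁) = 0)
    (h2 : RingQuot.mkAlgHom ℂ (rel3 g₁ g₂ g₃) (permHom p f₂) = 0)
    (h3 : RingQuot.mkAlgHom ℂ (rel3 g₁ g₂ g₃) (permHom p f₃) = 0)
    (h1' : RingQuot.mkAlgHom ℂ (rel3 f₁ f₂ f₃) (permHom q g₁) = 0)
    (h2' : RingQuot.mkAlgHom ℂ (rel3 f₁ f₂ f₃) (permHom q g₂) = 0)
    (h3' : RingQuot.mkAlgHom ℂ (rel3 f₁ f₂ f₃) (permHom q g₃) = 0) :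
    GrIso f₁ f₂ f₃ g₁ g₂ g₃ := by
  let Φ : QuadAlg f₁ f₂ f₃ →ₐ[ℂ] QuadAlg g₁ g₂ g₃ :=
    RingQuot.liftAlgHom ℂ ⟨(RingQuot.mkAlgHom ℂ (rel3 g₁ g₂ g₃)).comp (permHom p), by
      rintro x y ⟨(rfl | rfl | rfl), rfl⟩ <;> simp [h1, h2, h3]⟩
  let Ψ : QuadAlg g₁ g₂ g₃ →ₐ[ℂ] QuadAlg f₁ f₂ f₃ :=
    RingQuot.liftAlgHom ℂ ⟨(RingQuot.mkAlgHom ℂ (rel3 f₁ f₂ f₃)).comp (permHom q), by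
      rintro x y ⟨(rfl | rfl | rfl), rfl⟩ <;> simp [h1', h2', h3']⟩
  have hΦ : ∀ x : F3, Φ (RingQuot.mkAlgHom ℂ _ x)
      = RingQuot.mkAlgHom ℂ (rel3 g₁ g₂ g₃) (permHom p x) := by
    intro x; exact RingQuot.liftAlgHom_mkAlgHom_apply _ _ _ _
  have hΨ : ∀ x : F3, Ψ (RingQuot.mkAlgHom ℂ _ x)
      = RingQuot.mkAlgHom ℂ (rel3 f₁ f₂ f₃) (permHom q x) := by
    intro x; exact RingQuot.liftAlgHom_mkAlgHom_apply _ _ _ _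
  have hc1 : Φ.comp Ψ = AlgHom.id ℂ _ := by
    apply RingQuot.ringQuot_ext'
    apply FreeAlgebra.hom_ext
    funext i
    simp [AlgHom.comp_apply, hΨ, permHom_gen, hΦ, hpq]
  have hc2 : Ψ.comp Φ = AlgHom.id ℂ _ := by
    apply RingQuot.ringQuot_ext'
    apply FreeAlgebra.hom_ext
    funext i
    simp [AlgHom.comp_apply, hΦ, permHom_gen, hΨ, hqp]
  refine ⟨AlgEquiv.ofAlgHom Φ Ψ hc1 hc2, ?_⟩
  rw [genSpan, genSpan, Submodule.map_span]
  congr 1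
  have ev : ∀ x : F3, (AlgEquiv.ofAlgHom Φ Ψ hc1 hc2).toLinearMap (RingQuot.mkAlgHom ℂ (rel3 f₁ f₂ f₃) x)
      = RingQuot.mkAlgHom ℂ (rel3 g₁ g₂ g₃) (permHom p x) := fun x => hΦ x
  rw [Set.image_insert_eq, Set.image_insert_eq, Set.image_singleton, ev, ev, ev]
  simp only [X, Y, Z, permHom_gen]
  have lhs_eq : ({RingQuot.mkAlgHom ℂ (rel3 g₁ g₂ g₃) (FreeAlgebra.ι ℂ (p 0)),
      RingQuot.mkAlgHom ℂ (rel3 g₁ g₂ g₃) (FreeAlgebra.ι ℂ (p 1)),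
      RingQuot.mkAlgHom ℂ (rel3 g₁ g₂ g₃) (FreeAlgebra.ι ℂ (p 2))} : Set (QuadAlg g₁ g₂ g₃))
      = (fun i => RingQuot.mkAlgHom ℂ (rel3 g₁ g₂ g₃) (FreeAlgebra.ι ℂ i)) '' {p 0, p 1, p 2} := by
    rw [Set.image_insert_eq, Set.image_insert_eq, Set.image_singleton]
  rw [lhs_eq, hset]
  rw [Set.image_insert_eq, Set.image_insert_eq, Set.image_singleton]

lemma transfer_pos {Q : Type} [AddCommGroup Q] [Module ℂ Q] (u v : Q) (l s t s' t' : ℂ)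
    (hl : l ≠ 0) (hs : s' = l*s) (ht : t' = l*t) (h : s' • u - t' • v = 0) :
    s • u - t • v = 0 := by
  rw [hs, ht] at h
  exact unscale_rel _ _ l s t hl h

lemma transfer_neg {Q : Type} [AddCommGroup Q] [Module ℂ Q] (u v : Q) (l s t s' t' : ℂ)
    (hl : l ≠ 0) (hs : s' = l*t) (ht : t' = l*s) (h : s' • u - t' • v = 0) :
    s • v - t • u = 0 := by
  rw [hs, ht] at h
  exact unscale_rel _ _ l s t hl (neg_rel _ _ _ _ h)

lemma backward (al be ga alp bep gap l : ℂ) (hl : l ≠ 0)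
    (hd : (alp = l*al ∧ bep = l*be ∧ gap = l*ga) ∨
        (alp = l*al ∧ bep = l*ga ∧ gap = l*be) ∨
        (alp = l*be ∧ bep = l*al ∧ gap = l*ga) ∨
        (alp = l*be ∧ bep = l*ga ∧ gap = l*al) ∨
        (alp = l*ga ∧ bep = l*al ∧ gap = l*be) ∨
        (alp = l*ga ∧ bep = l*be ∧ gap = l*al)) :
    GrIso (al • (X*Y) - be • (Y*X)) (be • (Y*Z) - ga • (Z*Y)) (ga • (Z*X) - al • (X*Z))
      (alp • (X*Y) - bep • (Y*X)) (bep • (Y*Z) - gap • (Z*Y)) (gap • (Z*X) - alp • (X*Z)) := by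
  have hT1 : alp • (RingQuot.mkAlgHom ℂ (rel3 (alp • (X*Y) - bep • (Y*X)) (bep • (Y*Z) - gap • (Z*Y)) (gap • (Z*X) - alp • (X*Z))) (FreeAlgebra.ι ℂ 0) * RingQuot.mkAlgHom ℂ _ (FreeAlgebra.ι ℂ 1)) - bep • (RingQuot.mkAlgHom ℂ _ (FreeAlgebra.ι ℂ 1) * RingQuot.mkAlgHom ℂ _ (FreeAlgebra.ι ℂ 0)) = 0 := by
    have h0 := RingQuot.mkAlgHom_rel ℂ (s := rel3 (alp • (X*Y) - bep • (Y*X)) (bep • (Y*Z) - gap • (Z*Y)) (gap • (Z*X) - alp • (X*Z))) (x := alp • (X*Y) - bep • (Y*X)) (y := 0) ⟨Or.inl rfl, rfl⟩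
    rw [map_zero] at h0
    simp only [map_sub, map_smul, map_mul] at h0
    simpa only [X, Y, Z] using h0
  have hT2 : bep • (RingQuot.mkAlgHom ℂ (rel3 (alp • (X*Y) - bep • (Y*X)) (bep • (Y*Z) - gap • (Z*Y)) (gap • (Z*X) - alp • (X*Z))) (FreeAlgebra.ι ℂ 1) * RingQuot.mkAlgHom ℂ _ (FreeAlgebra.ι ℂ 2)) - gap • (RingQuot.mkAlgHom ℂ _ (FreeAlgebra.ι ℂ 2) * RingQuot.mkAlgHom ℂ _ (FreeAlgebra.ι ℂ 1)) = 0 := by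
    have h0 := RingQuot.mkAlgHom_rel ℂ (s := rel3 (alp • (X*Y) - bep • (Y*X)) (bep • (Y*Z) - gap • (Z*Y)) (gap • (Z*X) - alp • (X*Z))) (x := bep • (Y*Z) - gap • (Z*Y)) (y := 0) ⟨Or.inr (Or.inl rfl), rfl⟩
    rw [map_zero] at h0
    simp only [map_sub, map_smul, map_mul] at h0
    simpa only [X, Y, Z] using h0
  have hT3 : gap • (RingQuot.mkAlgHom ℂ (rel3 (alp • (X*Y) - bep • (Y*X)) (bep • (Y*Z) - gap • (Z*Y)) (gap • (Z*X) - alp • (X*Z))) (FreeAlgebra.ι ℂ 2) * RingQuot.mkAlgHom ℂ _ (FreeAlgebra.ι ℂ 0)) - alp • (RingQuot.mkAlgHom ℂ _ (FreeAlgebra.ι ℂ 0) * RingQuot.mkAlgHom ℂ _ (FreeAlgebra.ι ℂ 2)) = 0 := by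
    have h0 := RingQuot.mkAlgHom_rel ℂ (s := rel3 (alp • (X*Y) - bep • (Y*X)) (bep • (Y*Z) - gap • (Z*Y)) (gap • (Z*X) - alp • (X*Z))) (x := gap • (Z*X) - alp • (X*Z)) (y := 0) ⟨Or.inr (Or.inr rfl), rfl⟩
    rw [map_zero] at h0
    simp only [map_sub, map_smul, map_mul] at h0
    simpa only [X, Y, Z] using h0
  have hS1 : al • (RingQuot.mkAlgHom ℂ (rel3 (al • (X*Y) - be • (Y*X)) (be • (Y*Z) - ga • (Z*Y)) (ga • (Z*X) - al • (X*Z))) (FreeAlgebra.ι ℂ 0) * RingQuot.mkAlgHom ℂ _ (FreeAlgebra.ι ℂ 1)) - be • (RingQuot.mkAlgHom ℂ _ (FreeAlgebra.ι ℂ 1) * RingQuot.mkAlgHom ℂ _ (FreeAlgebra.ι ℂ 0)) = 0 := by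
    have h0 := RingQuot.mkAlgHom_rel ℂ (s := rel3 (al • (X*Y) - be • (Y*X)) (be • (Y*Z) - ga • (Z*Y)) (ga • (Z*X) - al • (X*Z))) (x := al • (X*Y) - be • (Y*X)) (y := 0) ⟨Or.inl rfl, rfl⟩
    rw [map_zero] at h0
    simp only [map_sub, map_smul, map_mul] at h0
    simpa only [X, Y, Z] using h0
  have hS2 : be • (RingQuot.mkAlgHom ℂ (rel3 (al • (X*Y) - be • (Y*X)) (be • (Y*Z) - ga • (Z*Y)) (ga • (Z*X) - al • (X*Z))) (FreeAlgebra.ι ℂ 1) * RingQuot.mkAlgHom ℂ _ (FreeAlgebra.ι ℂ 2)) - ga • (RingQuot.mkAlgHom ℂ _ (FreeAlgebra.ι ℂ 2) * RingQuot.mkAlgHom ℂ _ (FreeAlgebra.ι ℂ 1)) = 0 := by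
    have h0 := RingQuot.mkAlgHom_rel ℂ (s := rel3 (al • (X*Y) - be • (Y*X)) (be • (Y*Z) - ga • (Z*Y)) (ga • (Z*X) - al • (X*Z))) (x := be • (Y*Z) - ga • (Z*Y)) (y := 0) ⟨Or.inr (Or.inl rfl), rfl⟩
    rw [map_zero] at h0
    simp only [map_sub, map_smul, map_mul] at h0
    simpa only [X, Y, Z] using h0
  have hS3 : ga • (RingQuot.mkAlgHom ℂ (rel3 (al • (X*Y) - be • (Y*X)) (be • (Y*Z) - ga • (Z*Y)) (ga • (Z*X) - al • (X*Z))) (FreeAlgebra.ι ℂ 2) * RingQuot.mkAlgHom ℂ _ (FreeAlgebra.ι ℂ 0)) - al • (RingQuot.mkAlgHom ℂ _ (FreeAlgebra.ι ℂ 0) * RingQuot.mkAlgHom ℂ _ (FreeAlgebra.ι ℂ 2)) = 0 := by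
    have h0 := RingQuot.mkAlgHom_rel ℂ (s := rel3 (al • (X*Y) - be • (Y*X)) (be • (Y*Z) - ga • (Z*Y)) (ga • (Z*X) - al • (X*Z))) (x := ga • (Z*X) - al • (X*Z)) (y := 0) ⟨Or.inr (Or.inr rfl), rfl⟩
    rw [map_zero] at h0
    simp only [map_sub, map_smul, map_mul] at h0
    simpa only [X, Y, Z] using h0
  rcases hd with ⟨ea, eb, eg⟩ | ⟨ea, eb, eg⟩ | ⟨ea, eb, eg⟩ | ⟨ea, eb, eg⟩ | ⟨ea, eb, eg⟩ | ⟨ea, eb, eg⟩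
  · refine mkGrIso _ _ _ _ _ _ (![0,1,2]) (![0,1,2]) (by decide) (by decide)
      (by ext x; fin_cases x <;> simp) ?_ ?_ ?_ ?_ ?_ ?_
    · simp only [map_sub, map_smul, map_mul]
      simp only [map_sub, map_smul, map_mul, X, Y, Z, permHom_gen, Matrix.cons_val_zero, Matrix.cons_val_one, Matrix.head_cons, Matrix.cons_val_two, Matrix.tail_cons]
      exact transfer_pos _ _ l al be _ _ hl ea eb hT1
    · simp only [map_sub, map_smul, map_mul]
      simp only [map_sub, map_smul, map_mul, X, Y, Z, permHom_gen, Matrix.cons_val_zero, Matrix.cons_val_one, Matrix.head_cons, Matrix.cons_val_two, Matrix.tail_cons]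
      exact transfer_pos _ _ l be ga _ _ hl eb eg hT2
    · simp only [map_sub, map_smul, map_mul]
      simp only [map_sub, map_smul, map_mul, X, Y, Z, permHom_gen, Matrix.cons_val_zero, Matrix.cons_val_one, Matrix.head_cons, Matrix.cons_val_two, Matrix.tail_cons]
      exact transfer_pos _ _ l ga al _ _ hl eg ea hT3
    · simp only [map_sub, map_smul, map_mul]
      simp only [map_sub, map_smul, map_mul, X, Y, Z, permHom_gen, Matrix.cons_val_zero, Matrix.cons_val_one, Matrix.head_cons, Matrix.cons_val_two, Matrix.tail_cons]
      rw [ea, eb]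
      exact scale_rel _ _ l _ _ hS1
    · simp only [map_sub, map_smul, map_mul]
      simp only [map_sub, map_smul, map_mul, X, Y, Z, permHom_gen, Matrix.cons_val_zero, Matrix.cons_val_one, Matrix.head_cons, Matrix.cons_val_two, Matrix.tail_cons]
      rw [eb, eg]
      exact scale_rel _ _ l _ _ hS2
    · simp only [map_sub, map_smul, map_mul]
      simp only [map_sub, map_smul, map_mul, X, Y, Z, permHom_gen, Matrix.cons_val_zero, Matrix.cons_val_one, Matrix.head_cons, Matrix.cons_val_two, Matrix.tail_cons]
      rw [eg, ea]
      exact scale_rel _ _ l _ _ hS3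
  · refine mkGrIso _ _ _ _ _ _ (![0,2,1]) (![0,2,1]) (by decide) (by decide)
      (by ext x; fin_cases x <;> simp) ?_ ?_ ?_ ?_ ?_ ?_
    · simp only [map_sub, map_smul, map_mul]
      simp only [map_sub, map_smul, map_mul, X, Y, Z, permHom_gen, Matrix.cons_val_zero, Matrix.cons_val_one, Matrix.head_cons, Matrix.cons_val_two, Matrix.tail_cons]
      exact transfer_neg _ _ l al be _ _ hl eg ea hT3
    · simp only [map_sub, map_smul, map_mul]
      simp only [map_sub, map_smul, map_mul, X, Y, Z, permHom_gen, Matrix.cons_val_zero, Matrix.cons_val_one, Matrix.head_cons, Matrix.cons_val_two, Matrix.tail_cons]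
      exact transfer_neg _ _ l be ga _ _ hl eb eg hT2
    · simp only [map_sub, map_smul, map_mul]
      simp only [map_sub, map_smul, map_mul, X, Y, Z, permHom_gen, Matrix.cons_val_zero, Matrix.cons_val_one, Matrix.head_cons, Matrix.cons_val_two, Matrix.tail_cons]
      exact transfer_neg _ _ l ga al _ _ hl ea eb hT1
    · simp only [map_sub, map_smul, map_mul]
      simp only [map_sub, map_smul, map_mul, X, Y, Z, permHom_gen, Matrix.cons_val_zero, Matrix.cons_val_one, Matrix.head_cons, Matrix.cons_val_two, Matrix.tail_cons]
      rw [ea, eb]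
      exact scale_rel _ _ l _ _ (neg_rel _ _ _ _ hS3)
    · simp only [map_sub, map_smul, map_mul]
      simp only [map_sub, map_smul, map_mul, X, Y, Z, permHom_gen, Matrix.cons_val_zero, Matrix.cons_val_one, Matrix.head_cons, Matrix.cons_val_two, Matrix.tail_cons]
      rw [eb, eg]
      exact scale_rel _ _ l _ _ (neg_rel _ _ _ _ hS2)
    · simp only [map_sub, map_smul, map_mul]
      simp only [map_sub, map_smul, map_mul, X, Y, Z, permHom_gen, Matrix.cons_val_zero, Matrix.cons_val_one, Matrix.head_cons, Matrix.cons_val_two, Matrix.tail_cons]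
      rw [eg, ea]
      exact scale_rel _ _ l _ _ (neg_rel _ _ _ _ hS1)
  · refine mkGrIso _ _ _ _ _ _ (![1,0,2]) (![1,0,2]) (by decide) (by decide)
      (by ext x; fin_cases x <;> simp) ?_ ?_ ?_ ?_ ?_ ?_
    · simp only [map_sub, map_smul, map_mul]
      simp only [map_sub, map_smul, map_mul, X, Y, Z, permHom_gen, Matrix.cons_val_zero, Matrix.cons_val_one, Matrix.head_cons, Matrix.cons_val_two, Matrix.tail_cons]
      exact transfer_neg _ _ l al be _ _ hl ea eb hT1
    · simp only [map_sub, map_smul, map_mul]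
      simp only [map_sub, map_smul, map_mul, X, Y, Z, permHom_gen, Matrix.cons_val_zero, Matrix.cons_val_one, Matrix.head_cons, Matrix.cons_val_two, Matrix.tail_cons]
      exact transfer_neg _ _ l be ga _ _ hl eg ea hT3
    · simp only [map_sub, map_smul, map_mul]
      simp only [map_sub, map_smul, map_mul, X, Y, Z, permHom_gen, Matrix.cons_val_zero, Matrix.cons_val_one, Matrix.head_cons, Matrix.cons_val_two, Matrix.tail_cons]
      exact transfer_neg _ _ l ga al _ _ hl eb eg hT2
    · simp only [map_sub, map_smul, map_mul]
      simp only [map_sub, map_smul, map_mul, X, Y, Z, permHom_gen, Matrix.cons_val_zero, Matrix.cons_val_one, Matrix.head_cons, Matrix.cons_val_two, Matrix.tail_cons]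
      rw [ea, eb]
      exact scale_rel _ _ l _ _ (neg_rel _ _ _ _ hS1)
    · simp only [map_sub, map_smul, map_mul]
      simp only [map_sub, map_smul, map_mul, X, Y, Z, permHom_gen, Matrix.cons_val_zero, Matrix.cons_val_one, Matrix.head_cons, Matrix.cons_val_two, Matrix.tail_cons]
      rw [eb, eg]
      exact scale_rel _ _ l _ _ (neg_rel _ _ _ _ hS3)
    · simp only [map_sub, map_smul, map_mul]
      simp only [map_sub, map_smul, map_mul, X, Y, Z, permHom_gen, Matrix.cons_val_zero, Matrix.cons_val_one, Matrix.head_cons, Matrix.cons_val_two, Matrix.tail_cons]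
      rw [eg, ea]
      exact scale_rel _ _ l _ _ (neg_rel _ _ _ _ hS2)
  · refine mkGrIso _ _ _ _ _ _ (![2,0,1]) (![1,2,0]) (by decide) (by decide)
      (by ext x; fin_cases x <;> simp) ?_ ?_ ?_ ?_ ?_ ?_
    · simp only [map_sub, map_smul, map_mul]
      simp only [map_sub, map_smul, map_mul, X, Y, Z, permHom_gen, Matrix.cons_val_zero, Matrix.cons_val_one, Matrix.head_cons, Matrix.cons_val_two, Matrix.tail_cons]
      exact transfer_pos _ _ l al be _ _ hl eg ea hT3
    · simp only [map_sub, map_smul, map_mul]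
      simp only [map_sub, map_smul, map_mul, X, Y, Z, permHom_gen, Matrix.cons_val_zero, Matrix.cons_val_one, Matrix.head_cons, Matrix.cons_val_two, Matrix.tail_cons]
      exact transfer_pos _ _ l be ga _ _ hl ea eb hT1
    · simp only [map_sub, map_smul, map_mul]
      simp only [map_sub, map_smul, map_mul, X, Y, Z, permHom_gen, Matrix.cons_val_zero, Matrix.cons_val_one, Matrix.head_cons, Matrix.cons_val_two, Matrix.tail_cons]
      exact transfer_pos _ _ l ga al _ _ hl eb eg hT2
    · simp only [map_sub, map_smul, map_mul]
      simp only [map_sub, map_smul, map_mul, X, Y, Z, permHom_gen, Matrix.cons_val_zero, Matrix.cons_val_one, Matrix.head_cons, Matrix.cons_val_two, Matrix.tail_cons]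
      rw [ea, eb]
      exact scale_rel _ _ l _ _ hS2
    · simp only [map_sub, map_smul, map_mul]
      simp only [map_sub, map_smul, map_mul, X, Y, Z, permHom_gen, Matrix.cons_val_zero, Matrix.cons_val_one, Matrix.head_cons, Matrix.cons_val_two, Matrix.tail_cons]
      rw [eb, eg]
      exact scale_rel _ _ l _ _ hS3
    · simp only [map_sub, map_smul, map_mul]
      simp only [map_sub, map_smul, map_mul, X, Y, Z, permHom_gen, Matrix.cons_val_zero, Matrix.cons_val_one, Matrix.head_cons, Matrix.cons_val_two, Matrix.tail_cons]
      rw [eg, ea]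
      exact scale_rel _ _ l _ _ hS1
  · refine mkGrIso _ _ _ _ _ _ (![1,2,0]) (![2,0,1]) (by decide) (by decide)
      (by ext x; fin_cases x <;> simp) ?_ ?_ ?_ ?_ ?_ ?_
    · simp only [map_sub, map_smul, map_mul]
      simp only [map_sub, map_smul, map_mul, X, Y, Z, permHom_gen, Matrix.cons_val_zero, Matrix.cons_val_one, Matrix.head_cons, Matrix.cons_val_two, Matrix.tail_cons]
      exact transfer_pos _ _ l al be _ _ hl eb eg hT2
    · simp only [map_sub, map_smul, map_mul]
      simp only [map_sub, map_smul, map_mul, X, Y, Z, permHom_gen, Matrix.cons_val_zero, Matrix.cons_val_one, Matrix.head_cons, Matrix.cons_val_two, Matrix.tail_cons]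
      exact transfer_pos _ _ l be ga _ _ hl eg ea hT3
    · simp only [map_sub, map_smul, map_mul]
      simp only [map_sub, map_smul, map_mul, X, Y, Z, permHom_gen, Matrix.cons_val_zero, Matrix.cons_val_one, Matrix.head_cons, Matrix.cons_val_two, Matrix.tail_cons]
      exact transfer_pos _ _ l ga al _ _ hl ea eb hT1
    · simp only [map_sub, map_smul, map_mul]
      simp only [map_sub, map_smul, map_mul, X, Y, Z, permHom_gen, Matrix.cons_val_zero, Matrix.cons_val_one, Matrix.head_cons, Matrix.cons_val_two, Matrix.tail_cons]
      rw [ea, eb]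
      exact scale_rel _ _ l _ _ hS3
    · simp only [map_sub, map_smul, map_mul]
      simp only [map_sub, map_smul, map_mul, X, Y, Z, permHom_gen, Matrix.cons_val_zero, Matrix.cons_val_one, Matrix.head_cons, Matrix.cons_val_two, Matrix.tail_cons]
      rw [eb, eg]
      exact scale_rel _ _ l _ _ hS1
    · simp only [map_sub, map_smul, map_mul]
      simp only [map_sub, map_smul, map_mul, X, Y, Z, permHom_gen, Matrix.cons_val_zero, Matrix.cons_val_one, Matrix.head_cons, Matrix.cons_val_two, Matrix.tail_cons]
      rw [eg, ea]
      exact scale_rel _ _ l _ _ hS2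
  · refine mkGrIso _ _ _ _ _ _ (![2,1,0]) (![2,1,0]) (by decide) (by decide)
      (by ext x; fin_cases x <;> simp) ?_ ?_ ?_ ?_ ?_ ?_
    · simp only [map_sub, map_smul, map_mul]
      simp only [map_sub, map_smul, map_mul, X, Y, Z, permHom_gen, Matrix.cons_val_zero, Matrix.cons_val_one, Matrix.head_cons, Matrix.cons_val_two, Matrix.tail_cons]
      exact transfer_neg _ _ l al be _ _ hl eb eg hT2
    · simp only [map_sub, map_smul, map_mul]
      simp only [map_sub, map_smul, map_mul, X, Y, Z, permHom_gen, Matrix.cons_val_zero, Matrix.cons_val_one, Matrix.head_cons, Matrix.cons_val_two, Matrix.tail_cons]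
      exact transfer_neg _ _ l be ga _ _ hl ea eb hT1
    · simp only [map_sub, map_smul, map_mul]
      simp only [map_sub, map_smul, map_mul, X, Y, Z, permHom_gen, Matrix.cons_val_zero, Matrix.cons_val_one, Matrix.head_cons, Matrix.cons_val_two, Matrix.tail_cons]
      exact transfer_neg _ _ l ga al _ _ hl eg ea hT3
    · simp only [map_sub, map_smul, map_mul]
      simp only [map_sub, map_smul, map_mul, X, Y, Z, permHom_gen, Matrix.cons_val_zero, Matrix.cons_val_one, Matrix.head_cons, Matrix.cons_val_two, Matrix.tail_cons]
      rw [ea, eb]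
      exact scale_rel _ _ l _ _ (neg_rel _ _ _ _ hS2)
    · simp only [map_sub, map_smul, map_mul]
      simp only [map_sub, map_smul, map_mul, X, Y, Z, permHom_gen, Matrix.cons_val_zero, Matrix.cons_val_one, Matrix.head_cons, Matrix.cons_val_two, Matrix.tail_cons]
      rw [eb, eg]
      exact scale_rel _ _ l _ _ (neg_rel _ _ _ _ hS1)
    · simp only [map_sub, map_smul, map_mul]
      simp only [map_sub, map_smul, map_mul, X, Y, Z, permHom_gen, Matrix.cons_val_zero, Matrix.cons_val_one, Matrix.head_cons, Matrix.cons_val_two, Matrix.tail_cons]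
      rw [eg, ea]
      exact scale_rel _ _ l _ _ (neg_rel _ _ _ _ hS3)


end TP1Back

namespace TP1Fwd
open TP1

lemma mem_span_triple {M : Type} [AddCommGroup M] [Module ℂ M] {u v w x : M}
    (h : x ∈ Submodule.span ℂ {u, v, w}) : ∃ a b c : ℂ, x = a•u + b•v + c•w := by
  rw [Submodule.mem_span_insert] at h
  obtain ⟨a, z, hz, rfl⟩ := h
  rw [Submodule.mem_span_insert] at hz
  obtain ⟨b, w', hw, rfl⟩ := hz
  rw [Submodule.mem_span_singleton] at hw
  obtain ⟨c, rfl⟩ := hw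
  exact ⟨a, b, c, by rw [add_assoc]⟩

set_option maxHeartbeats 1000000 in
theorem forward (al be ga alp bep gap : ℂ)
    (h : al * be * ga ≠ 0) (h' : alp * bep * gap ≠ 0)
    (hgr : GrIso (al • (X*Y) - be • (Y*X)) (be • (Y*Z) - ga • (Z*Y)) (ga • (Z*X) - al • (X*Z))
      (alp • (X*Y) - bep • (Y*X)) (bep • (Y*Z) - gap • (Z*Y)) (gap • (Z*X) - alp • (X*Z))) :
    (∃ l : ℂ, l ≠ 0 ∧ (
        (alp = l*al ∧ bep = l*be ∧ gap = l*ga) ∨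
        (alp = l*al ∧ bep = l*ga ∧ gap = l*be) ∨
        (alp = l*be ∧ bep = l*al ∧ gap = l*ga) ∨
        (alp = l*be ∧ bep = l*ga ∧ gap = l*al) ∨
        (alp = l*ga ∧ bep = l*al ∧ gap = l*be) ∨
        (alp = l*ga ∧ bep = l*be ∧ gap = l*al))) := by
  have hal : al ≠ 0 := left_ne_zero_of_mul (left_ne_zero_of_mul h)
  have hbe : be ≠ 0 := right_ne_zero_of_mul (left_ne_zero_of_mul h)
  have hga : ga ≠ 0 := right_ne_zero_of_mul h
  have halp : alp ≠ 0 := left_ne_zero_of_mul (left_ne_zero_of_mul h')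
  have hbep : bep ≠ 0 := right_ne_zero_of_mul (left_ne_zero_of_mul h')
  have hgap : gap ≠ 0 := right_ne_zero_of_mul h'
  obtain ⟨e, hspan⟩ := hgr
  -- decompositions of the images of the generators
  have hmemX : e (RingQuot.mkAlgHom ℂ _ X) ∈ genSpan (alp • (X*Y) - bep • (Y*X)) (bep • (Y*Z) - gap • (Z*Y)) (gap • (Z*X) - alp • (X*Z)) := by
    rw [← hspan]
    exact ⟨_, Submodule.subset_span (by left; rfl), rfl⟩
  have hmemY : e (RingQuot.mkAlgHom ℂ _ Y) ∈ genSpan (alp • (X*Y) - bep • (Y*X)) (bep • (Y*Z) - gap • (Z*Y)) (gap • (Z*X) - alp • (X*Z)) := by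
    rw [← hspan]
    exact ⟨_, Submodule.subset_span (by right; left; rfl), rfl⟩
  have hmemZ : e (RingQuot.mkAlgHom ℂ _ Z) ∈ genSpan (alp • (X*Y) - bep • (Y*X)) (bep • (Y*Z) - gap • (Z*Y)) (gap • (Z*X) - alp • (X*Z)) := by
    rw [← hspan]
    exact ⟨_, Submodule.subset_span (by right; right; rfl), rfl⟩
  simp only [genSpan] at hmemX hmemY hmemZ
  obtain ⟨a1, a2, a3, hex⟩ := mem_span_triple hmemX
  obtain ⟨b1, b2, b3, hey⟩ := mem_span_triple hmemY
  obtain ⟨c1, c2, c3, hez⟩ := mem_span_triple hmemZ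
  set xg := RingQuot.mkAlgHom ℂ (rel3 (alp • (X*Y) - bep • (Y*X)) (bep • (Y*Z) - gap • (Z*Y)) (gap • (Z*X) - alp • (X*Z))) X with hxgdef
  set yg := RingQuot.mkAlgHom ℂ (rel3 (alp • (X*Y) - bep • (Y*X)) (bep • (Y*Z) - gap • (Z*Y)) (gap • (Z*X) - alp • (X*Z))) Y with hygdef
  set zg := RingQuot.mkAlgHom ℂ (rel3 (alp • (X*Y) - bep • (Y*X)) (bep • (Y*Z) - gap • (Z*Y)) (gap • (Z*X) - alp • (X*Z))) Z with hzgdef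
  -- every generator of the target is a combination of the images
  have hsurj : ∀ w, w ∈ genSpan (alp • (X*Y) - bep • (Y*X)) (bep • (Y*Z) - gap • (Z*Y)) (gap • (Z*X) - alp • (X*Z)) →
      ∃ p q r : ℂ, w = p • e (RingQuot.mkAlgHom ℂ _ X) + q • e (RingQuot.mkAlgHom ℂ _ Y) + r • e (RingQuot.mkAlgHom ℂ _ Z) := by
    intro w hw
    rw [← hspan] at hw
    obtain ⟨v, hv, hev⟩ := hw
    simp only [genSpan] at hv
    obtain ⟨p, q, r, rfl⟩ := mem_span_triple hv
    refine ⟨p, q, r, ?_⟩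
    rw [← hev]
    simp only [map_add, map_smul, AlgEquiv.toLinearMap_apply]
  obtain ⟨p1, q1, r1, hw1⟩ := hsurj xg (Submodule.subset_span (by left; rfl))
  obtain ⟨p2, q2, r2, hw2⟩ := hsurj yg (Submodule.subset_span (by right; left; rfl))
  obtain ⟨p3, q3, r3, hw3⟩ := hsurj zg (Submodule.subset_span (by right; right; rfl))
  rw [hex, hey, hez] at hw1 hw2 hw3
  have h01 : (p1*a1 + q1*b1 + r1*c1 - 1) • xg + (p1*a2 + q1*b2 + r1*c2) • yg + (p1*a3 + q1*b3 + r1*c3) • zg = 0 := by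
    have hs := sub_eq_zero.mpr hw1.symm
    rw [← hs]
    module
  have h02 : (p2*a1 + q2*b1 + r2*c1) • xg + (p2*a2 + q2*b2 + r2*c2 - 1) • yg + (p2*a3 + q2*b3 + r2*c3) • zg = 0 := by
    have hs := sub_eq_zero.mpr hw2.symm
    rw [← hs]
    module
  have h03 : (p3*a1 + q3*b1 + r3*c1) • xg + (p3*a2 + q3*b2 + r3*c2) • yg + (p3*a3 + q3*b3 + r3*c3 - 1) • zg = 0 := by
    have hs := sub_eq_zero.mpr hw3.symm
    rw [← hs]
    module
  obtain ⟨m11, m12, m13⟩ := three alp bep gap halp hbep hgap _ _ _ h01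
  obtain ⟨m21, m22, m23⟩ := three alp bep gap halp hbep hgap _ _ _ h02
  obtain ⟨m31, m32, m33⟩ := three alp bep gap halp hbep hgap _ _ _ h03
  -- invertibility of the coefficient matrix
  have hNM : (!![p1, q1, r1; p2, q2, r2; p3, q3, r3] : Matrix (Fin 3) (Fin 3) ℂ)
      * (!![a1, a2, a3; b1, b2, b3; c1, c2, c3] : Matrix (Fin 3) (Fin 3) ℂ) = 1 := by
    ext i j
    fin_cases i <;> fin_cases j <;>
      norm_num [Matrix.mul_apply, Fin.sum_univ_three, Matrix.one_apply, Fin.ext_iff]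
    all_goals simp only [Matrix.cons_val, Fin.isValue]
    · linear_combination m11
    · linear_combination m12
    · linear_combination m13
    · linear_combination m21
    · linear_combination m22
    · linear_combination m23
    · linear_combination m31
    · linear_combination m32
    · linear_combination m33
  have hdm : (!![a1, a2, a3; b1, b2, b3; c1, c2, c3] : Matrix (Fin 3) (Fin 3) ℂ).det ≠ 0 := by
    intro hz
    have hd1 := congrArg Matrix.det hNM
    rw [Matrix.det_mul, hz, mul_zero, Matrix.det_one] at hd1
    exact zero_ne_one hd1
  have hdetS : a1*b2*c3 - a1*b3*c2 - a2*b1*c3 + a2*b3*c1 + a3*b1*c2 - a3*b2*c1 ≠ 0 := by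
    intro hz
    apply hdm
    rw [Matrix.det_fin_three]
    simp only [Matrix.of_apply, Matrix.cons_val]
    norm_num
    linear_combination hz
  -- the three relations, pushed through e
  have hrel1 : al • (e (RingQuot.mkAlgHom ℂ _ X) * e (RingQuot.mkAlgHom ℂ _ Y))
      - be • (e (RingQuot.mkAlgHom ℂ _ Y) * e (RingQuot.mkAlgHom ℂ _ X)) = 0 := by
    have h0 : RingQuot.mkAlgHom ℂ (rel3 (al • (X*Y) - be • (Y*X)) (be • (Y*Z) - ga • (Z*Y)) (ga • (Z*X) - al • (X*Z))) (al • (X*Y) - be • (Y*X)) = 0 := by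
      rw [RingQuot.mkAlgHom_rel ℂ ⟨Or.inl rfl, rfl⟩, map_zero]
    have h1 := congrArg e h0
    simpa only [map_sub, map_smul, map_mul, map_zero] using h1
  have hrel2 : be • (e (RingQuot.mkAlgHom ℂ _ Y) * e (RingQuot.mkAlgHom ℂ _ Z))
      - ga • (e (RingQuot.mkAlgHom ℂ _ Z) * e (RingQuot.mkAlgHom ℂ _ Y)) = 0 := by
    have h0 : RingQuot.mkAlgHom ℂ (rel3 (al • (X*Y) - be • (Y*X)) (be • (Y*Z) - ga • (Z*Y)) (ga • (Z*X) - al • (X*Z))) (be • (Y*Z) - ga • (Z*Y)) = 0 := by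
      rw [RingQuot.mkAlgHom_rel ℂ ⟨Or.inr (Or.inl rfl), rfl⟩, map_zero]
    have h1 := congrArg e h0
    simpa only [map_sub, map_smul, map_mul, map_zero] using h1
  have hrel3 : ga • (e (RingQuot.mkAlgHom ℂ _ Z) * e (RingQuot.mkAlgHom ℂ _ X))
      - al • (e (RingQuot.mkAlgHom ℂ _ X) * e (RingQuot.mkAlgHom ℂ _ Z)) = 0 := by
    have h0 : RingQuot.mkAlgHom ℂ (rel3 (al • (X*Y) - be • (Y*X)) (be • (Y*Z) - ga • (Z*Y)) (ga • (Z*X) - al • (X*Z))) (ga • (Z*X) - al • (X*Z)) = 0 := by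
      rw [RingQuot.mkAlgHom_rel ℂ ⟨Or.inr (Or.inr rfl), rfl⟩, map_zero]
    have h1 := congrArg e h0
    simpa only [map_sub, map_smul, map_mul, map_zero] using h1
  rw [hex, hey] at hrel1
  rw [hey, hez] at hrel2
  rw [hez, hex] at hrel3
  have h91 : (al*a1*b1 - be*b1*a1) • (xg * xg) + (al*a1*b2 - be*b1*a2) • (xg * yg) + (al*a1*b3 - be*b1*a3) • (xg * zg)
      + (al*a2*b1 - be*b2*a1) • (yg * xg) + (al*a2*b2 - be*b2*a2) • (yg * yg) + (al*a2*b3 - be*b2*a3) • (yg * zg)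
      + (al*a3*b1 - be*b3*a1) • (zg * xg) + (al*a3*b2 - be*b3*a2) • (zg * yg) + (al*a3*b3 - be*b3*a3) • (zg * zg) = 0 := by
    rw [← hrel1]
    simp only [mul_add, add_mul, smul_mul_assoc, mul_smul_comm, smul_smul, smul_add, smul_sub]
    module
  have h92 : (be*b1*c1 - ga*c1*b1) • (xg * xg) + (be*b1*c2 - ga*c1*b2) • (xg * yg) + (be*b1*c3 - ga*c1*b3) • (xg * zg)
      + (be*b2*c1 - ga*c2*b1) • (yg * xg) + (be*b2*c2 - ga*c2*b2) • (yg * yg) + (be*b2*c3 - ga*c2*b3) • (yg * zg)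
      + (be*b3*c1 - ga*c3*b1) • (zg * xg) + (be*b3*c2 - ga*c3*b2) • (zg * yg) + (be*b3*c3 - ga*c3*b3) • (zg * zg) = 0 := by
    rw [← hrel2]
    simp only [mul_add, add_mul, smul_mul_assoc, mul_smul_comm, smul_smul, smul_add, smul_sub]
    module
  have h93 : (ga*c1*a1 - al*a1*c1) • (xg * xg) + (ga*c1*a2 - al*a1*c2) • (xg * yg) + (ga*c1*a3 - al*a1*c3) • (xg * zg)
      + (ga*c2*a1 - al*a2*c1) • (yg * xg) + (ga*c2*a2 - al*a2*c2) • (yg * yg) + (ga*c2*a3 - al*a2*c3) • (yg * zg)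
      + (ga*c3*a1 - al*a3*c1) • (zg * xg) + (ga*c3*a2 - al*a3*c2) • (zg * yg) + (ga*c3*a3 - al*a3*c3) • (zg * zg) = 0 := by
    rw [← hrel3]
    simp only [mul_add, add_mul, smul_mul_assoc, mul_smul_comm, smul_smul, smul_add, smul_sub]
    module
  obtain ⟨n100, n111, n122, n101, n112, n102⟩ := nine alp bep gap halp hbep hgap _ _ _ _ _ _ _ _ _ h91
  obtain ⟨n200, n211, n222, n201, n212, n202⟩ := nine alp bep gap halp hbep hgap _ _ _ _ _ _ _ _ _ h92
  obtain ⟨n300, n311, n322, n301, n312, n302⟩ := nine alp bep gap halp hbep hgap _ _ _ _ _ _ _ _ _ h93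
  exact keyScalar al be ga alp bep gap a1 a2 a3 b1 b2 b3 c1 c2 c3
    hal hbe hga halp hbep hgap hdetS
    (by linear_combination n100) (by linear_combination n111) (by linear_combination n122)
    (by linear_combination n101) (by linear_combination n112) (by linear_combination n102)
    (by linear_combination n200) (by linear_combination n211) (by linear_combination n222)
    (by linear_combination n201) (by linear_combination n212) (by linear_combination n202)
    (by linear_combination n300) (by linear_combination n311) (by linear_combination n322)
    (by linear_combination n301) (by linear_combination n312) (by linear_combination n302)


end TP1Fwd

theorem typeP1_iso_iff
    (α β γ α' β' γ' : ℂ)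
    (h : α * β * γ ≠ 0)
    (h' : α' * β' * γ' ≠ 0)
    : GrIso
      (α • (X*Y) - β • (Y*X))
      (β • (Y*Z) - γ • (Z*Y))
      (γ • (Z*X) - α • (X*Z))
      (α' • (X*Y) - β' • (Y*X))
      (β' • (Y*Z) - γ' • (Z*Y))
      (γ' • (Z*X) - α' • (X*Z))
      ↔
      (∃ l : ℂ, l ≠ 0 ∧ (
        (α' = l*α ∧ β' = l*β ∧ γ' = l*γ) ∨
        (α' = l*α ∧ β' = l*γ ∧ γ' = l*β) ∨
        (α' = l*β ∧ β' = l*α ∧ γ' = l*γ) ∨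
        (α' = l*β ∧ β' = l*γ ∧ γ' = l*α) ∨
        (α' = l*γ ∧ β' = l*α ∧ γ' = l*β) ∨
        (α' = l*γ ∧ β' = l*β ∧ γ' = l*α))) := by
  constructor
  · exact TP1Fwd.forward α β γ α' β' γ' h h'
  · rintro ⟨l, hl, hd⟩
    exact TP1Back.backward α β γ α' β' γ' l hl hd
end
end

section
/- (Type P₂) For α ∈ ℂ with α ≠ 0, let A(α) = ℂ⟨x,y,z⟩/(xy − yx + y², xz − αzx + αzy, yz − αzy). For α, α' ∈ ℂ both nonzero, the algebras A(α) and A(α') are isomorphic as graded algebras if and only if α' = α. -/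
noncomputable section

@[ext] structure Tr (β : ℂ) where
  c : ℂ
  x : ℂ
  y : ℂ
  z : ℂ
  xx : ℂ
  yx : ℂ
  yy : ℂ
  zx : ℂ
  zy : ℂ
  zz : ℂ

namespace Tr

variable {β : ℂ}

instance : Zero (Tr β) := ⟨⟨0,0,0,0,0,0,0,0,0,0⟩⟩
instance : One (Tr β) := ⟨⟨1,0,0,0,0,0,0,0,0,0⟩⟩
instance : Add (Tr β) := ⟨fun a b => ⟨a.c+b.c, a.x+b.x, a.y+b.y, a.z+b.z, a.xx+b.xx, a.yx+b.yx, a.yy+b.yy, a.zx+b.zx, a.zy+b.zy, a.zz+b.zz⟩⟩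
instance : Neg (Tr β) := ⟨fun a => ⟨-a.c, -a.x, -a.y, -a.z, -a.xx, -a.yx, -a.yy, -a.zx, -a.zy, -a.zz⟩⟩
instance : Sub (Tr β) := ⟨fun a b => ⟨a.c-b.c, a.x-b.x, a.y-b.y, a.z-b.z, a.xx-b.xx, a.yx-b.yx, a.yy-b.yy, a.zx-b.zx, a.zy-b.zy, a.zz-b.zz⟩⟩
instance : SMul ℂ (Tr β) := ⟨fun r a => ⟨r*a.c, r*a.x, r*a.y, r*a.z, r*a.xx, r*a.yx, r*a.yy, r*a.zx, r*a.zy, r*a.zz⟩⟩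
instance : Mul (Tr β) := ⟨fun a b => ⟨
  a.c*b.c,
  a.c*b.x + b.c*a.x,
  a.c*b.y + b.c*a.y,
  a.c*b.z + b.c*a.z,
  a.c*b.xx + b.c*a.xx + a.x*b.x,
  a.c*b.yx + b.c*a.yx + a.x*b.y + a.y*b.x,
  a.c*b.yy + b.c*a.yy - a.x*b.y + a.y*b.y,
  a.c*b.zx + b.c*a.zx + β*(a.x*b.z) + a.z*b.x,
  a.c*b.zy + b.c*a.zy - β*(a.x*b.z) + β*(a.y*b.z) + a.z*b.y,
  a.c*b.zz + b.c*a.zz + a.z*b.z⟩⟩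

@[simp] lemma zero_c : (0 : Tr β).c = 0 := rfl
@[simp] lemma one_c : (1 : Tr β).c = 1 := rfl
@[simp] lemma add_c (a b : Tr β) : (a + b).c = a.c + b.c := rfl
@[simp] lemma neg_c (a : Tr β) : (-a).c = -a.c := rfl
@[simp] lemma sub_c (a b : Tr β) : (a - b).c = a.c - b.c := rfl
@[simp] lemma smul_c (r : ℂ) (a : Tr β) : (r • a).c = r * a.c := rfl
@[simp] lemma mul_c (a b : Tr β) : (a * b).c = a.c*b.c := rfl
@[simp] lemma zero_x : (0 : Tr β).x = 0 := rfl
@[simp] lemma one_x : (1 : Tr β).x = 0 := rfl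
@[simp] lemma add_x (a b : Tr β) : (a + b).x = a.x + b.x := rfl
@[simp] lemma neg_x (a : Tr β) : (-a).x = -a.x := rfl
@[simp] lemma sub_x (a b : Tr β) : (a - b).x = a.x - b.x := rfl
@[simp] lemma smul_x (r : ℂ) (a : Tr β) : (r • a).x = r * a.x := rfl
@[simp] lemma mul_x (a b : Tr β) : (a * b).x = a.c*b.x + b.c*a.x := rfl
@[simp] lemma zero_y : (0 : Tr β).y = 0 := rfl
@[simp] lemma one_y : (1 : Tr β).y = 0 := rfl
@[simp] lemma add_y (a b : Tr β) : (a + b).y = a.y + b.y := rfl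
@[simp] lemma neg_y (a : Tr β) : (-a).y = -a.y := rfl
@[simp] lemma sub_y (a b : Tr β) : (a - b).y = a.y - b.y := rfl
@[simp] lemma smul_y (r : ℂ) (a : Tr β) : (r • a).y = r * a.y := rfl
@[simp] lemma mul_y (a b : Tr β) : (a * b).y = a.c*b.y + b.c*a.y := rfl
@[simp] lemma zero_z : (0 : Tr β).z = 0 := rfl
@[simp] lemma one_z : (1 : Tr β).z = 0 := rfl
@[simp] lemma add_z (a b : Tr β) : (a + b).z = a.z + b.z := rfl
@[simp] lemma neg_z (a : Tr β) : (-a).z = -a.z := rfl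
@[simp] lemma sub_z (a b : Tr β) : (a - b).z = a.z - b.z := rfl
@[simp] lemma smul_z (r : ℂ) (a : Tr β) : (r • a).z = r * a.z := rfl
@[simp] lemma mul_z (a b : Tr β) : (a * b).z = a.c*b.z + b.c*a.z := rfl
@[simp] lemma zero_xx : (0 : Tr β).xx = 0 := rfl
@[simp] lemma one_xx : (1 : Tr β).xx = 0 := rfl
@[simp] lemma add_xx (a b : Tr β) : (a + b).xx = a.xx + b.xx := rfl
@[simp] lemma neg_xx (a : Tr β) : (-a).xx = -a.xx := rfl
@[simp] lemma sub_xx (a b : Tr β) : (a - b).xx = a.xx - b.xx := rfl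
@[simp] lemma smul_xx (r : ℂ) (a : Tr β) : (r • a).xx = r * a.xx := rfl
@[simp] lemma mul_xx (a b : Tr β) : (a * b).xx = a.c*b.xx + b.c*a.xx + a.x*b.x := rfl
@[simp] lemma zero_yx : (0 : Tr β).yx = 0 := rfl
@[simp] lemma one_yx : (1 : Tr β).yx = 0 := rfl
@[simp] lemma add_yx (a b : Tr β) : (a + b).yx = a.yx + b.yx := rfl
@[simp] lemma neg_yx (a : Tr β) : (-a).yx = -a.yx := rfl
@[simp] lemma sub_yx (a b : Tr β) : (a - b).yx = a.yx - b.yx := rfl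
@[simp] lemma smul_yx (r : ℂ) (a : Tr β) : (r • a).yx = r * a.yx := rfl
@[simp] lemma mul_yx (a b : Tr β) : (a * b).yx = a.c*b.yx + b.c*a.yx + a.x*b.y + a.y*b.x := rfl
@[simp] lemma zero_yy : (0 : Tr β).yy = 0 := rfl
@[simp] lemma one_yy : (1 : Tr β).yy = 0 := rfl
@[simp] lemma add_yy (a b : Tr β) : (a + b).yy = a.yy + b.yy := rfl
@[simp] lemma neg_yy (a : Tr β) : (-a).yy = -a.yy := rfl
@[simp] lemma sub_yy (a b : Tr β) : (a - b).yy = a.yy - b.yy := rfl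
@[simp] lemma smul_yy (r : ℂ) (a : Tr β) : (r • a).yy = r * a.yy := rfl
@[simp] lemma mul_yy (a b : Tr β) : (a * b).yy = a.c*b.yy + b.c*a.yy - a.x*b.y + a.y*b.y := rfl
@[simp] lemma zero_zx : (0 : Tr β).zx = 0 := rfl
@[simp] lemma one_zx : (1 : Tr β).zx = 0 := rfl
@[simp] lemma add_zx (a b : Tr β) : (a + b).zx = a.zx + b.zx := rfl
@[simp] lemma neg_zx (a : Tr β) : (-a).zx = -a.zx := rfl
@[simp] lemma sub_zx (a b : Tr β) : (a - b).zx = a.zx - b.zx := rfl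
@[simp] lemma smul_zx (r : ℂ) (a : Tr β) : (r • a).zx = r * a.zx := rfl
@[simp] lemma mul_zx (a b : Tr β) : (a * b).zx = a.c*b.zx + b.c*a.zx + β*(a.x*b.z) + a.z*b.x := rfl
@[simp] lemma zero_zy : (0 : Tr β).zy = 0 := rfl
@[simp] lemma one_zy : (1 : Tr β).zy = 0 := rfl
@[simp] lemma add_zy (a b : Tr β) : (a + b).zy = a.zy + b.zy := rfl
@[simp] lemma neg_zy (a : Tr β) : (-a).zy = -a.zy := rfl
@[simp] lemma sub_zy (a b : Tr β) : (a - b).zy = a.zy - b.zy := rfl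
@[simp] lemma smul_zy (r : ℂ) (a : Tr β) : (r • a).zy = r * a.zy := rfl
@[simp] lemma mul_zy (a b : Tr β) : (a * b).zy = a.c*b.zy + b.c*a.zy - β*(a.x*b.z) + β*(a.y*b.z) + a.z*b.y := rfl
@[simp] lemma zero_zz : (0 : Tr β).zz = 0 := rfl
@[simp] lemma one_zz : (1 : Tr β).zz = 0 := rfl
@[simp] lemma add_zz (a b : Tr β) : (a + b).zz = a.zz + b.zz := rfl
@[simp] lemma neg_zz (a : Tr β) : (-a).zz = -a.zz := rfl
@[simp] lemma sub_zz (a b : Tr β) : (a - b).zz = a.zz - b.zz := rfl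
@[simp] lemma smul_zz (r : ℂ) (a : Tr β) : (r • a).zz = r * a.zz := rfl
@[simp] lemma mul_zz (a b : Tr β) : (a * b).zz = a.c*b.zz + b.c*a.zz + a.z*b.z := rfl

instance instAcg : AddCommGroup (Tr β) where
  add := (· + ·)
  zero := 0
  neg := Neg.neg
  sub := Sub.sub
  add_assoc a b c := by ext <;> simp <;> ring
  zero_add a := by ext <;> simp
  add_zero a := by ext <;> simp
  add_comm a b := by ext <;> simp <;> ring
  neg_add_cancel a := by ext <;> simp
  sub_eq_add_neg a b := by ext <;> simp <;> ring
  nsmul := nsmulRec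
  zsmul := zsmulRec

instance : Ring (Tr β) :=
  { instAcg with
    mul := (· * ·)
    one := 1
    left_distrib := fun a b c => by ext <;> simp <;> ring
    right_distrib := fun a b c => by ext <;> simp <;> ring
    zero_mul := fun a => by ext <;> simp
    mul_zero := fun a => by ext <;> simp
    mul_assoc := fun a b c => by ext <;> simp <;> ring
    one_mul := fun a => by ext <;> simp
    mul_one := fun a => by ext <;> simp }

instance : Module ℂ (Tr β) where
  one_smul a := by ext <;> simp
  mul_smul r s a := by ext <;> simp <;> ring
  smul_zero r := by ext <;> simp
  smul_add r a b := by ext <;> simp <;> ring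
  add_smul r s a := by ext <;> simp <;> ring
  zero_smul a := by ext <;> simp

def aMap (β : ℂ) : ℂ →+* Tr β where
  toFun r := ⟨r,0,0,0,0,0,0,0,0,0⟩
  map_one' := rfl
  map_mul' r s := by ext <;> simp
  map_zero' := rfl
  map_add' r s := by ext <;> simp

instance : Algebra ℂ (Tr β) where
  algebraMap := aMap β
  commutes' r a := by ext <;> simp [aMap] <;> ring
  smul_def' r a := by ext <;> simp [aMap] <;> ring

end Tr


namespace Tr

def gx (β : ℂ) : Tr β := ⟨0,1,0,0,0,0,0,0,0,0⟩
def gy (β : ℂ) : Tr β := ⟨0,0,1,0,0,0,0,0,0,0⟩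
def gz (β : ℂ) : Tr β := ⟨0,0,0,1,0,0,0,0,0,0⟩

def φ (β : ℂ) : F3 →ₐ[ℂ] Tr β :=
  FreeAlgebra.lift ℂ (fun i => if i = 0 then gx β else if i = 1 then gy β else gz β)

@[simp] lemma φ_X : φ β X = gx β := by
  simp [φ, X, FreeAlgebra.lift_ι_apply]

@[simp] lemma φ_Y : φ β Y = gy β := by
  simp [φ, Y, FreeAlgebra.lift_ι_apply]

@[simp] lemma φ_Z : φ β Z = gz β := by
  simp [φ, Z, FreeAlgebra.lift_ι_apply]

lemma φ_r1 : φ β (X*Y - Y*X + Y*Y) = 0 := by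
  simp only [map_add, map_sub, map_mul, φ_X, φ_Y]
  ext <;> simp [gx, gy] <;> ring

lemma φ_r2 : φ β (X*Z - β • (Z*X) + β • (Z*Y)) = 0 := by
  simp only [map_add, map_sub, map_mul, map_smul, φ_X, φ_Y, φ_Z]
  ext <;> simp [gx, gy, gz] <;> ring

lemma φ_r3 : φ β (Y*Z - β • (Z*Y)) = 0 := by
  simp only [map_add, map_sub, map_mul, map_smul, φ_X, φ_Y, φ_Z]
  ext <;> simp [gx, gy, gz] <;> ring

def Φ (β : ℂ) : QuadAlg (X*Y - Y*X + Y*Y) (X*Z - β • (Z*X) + β • (Z*Y)) (Y*Z - β • (Z*Y)) →ₐ[ℂ] Tr β :=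
  RingQuot.liftAlgHom ℂ ⟨φ β, by
    rintro a b ⟨(rfl|rfl|rfl), rfl⟩ <;>
      simp only [map_zero, φ_r1, φ_r2, φ_r3]⟩

@[simp] lemma Φ_mk (t : F3) :
    Φ β (RingQuot.mkAlgHom ℂ (rel3 (X*Y - Y*X + Y*Y) (X*Z - β • (Z*X) + β • (Z*Y)) (Y*Z - β • (Z*Y))) t)
      = φ β t := by
  simp [Φ, RingQuot.liftAlgHom_mkAlgHom_apply]

end Tr


lemma mem_span_triple {M : Type*} [AddCommGroup M] [Module ℂ M] {u v w m : M}
    (hm : m ∈ Submodule.span ℂ {u, v, w}) : ∃ a b c : ℂ, m = a • u + b • v + c • w := by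
  rw [Submodule.mem_span_insert] at hm
  obtain ⟨a, m', hm', rfl⟩ := hm
  rw [Submodule.mem_span_insert] at hm'
  obtain ⟨b, m'', hm'', rfl⟩ := hm'
  rw [Submodule.mem_span_singleton] at hm''
  obtain ⟨c, rfl⟩ := hm''
  exact ⟨a, b, c, by rw [add_assoc]⟩

set_option maxHeartbeats 2000000 in
theorem typeP2_iso_iff
    (α α' : ℂ)
    (h : α ≠ 0)
    (h' : α' ≠ 0)
    : GrIso
      (X*Y - Y*X + Y*Y)
      (X*Z - α • (Z*X) + α • (Z*Y))
      (Y*Z - α • (Z*Y))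
      (X*Y - Y*X + Y*Y)
      (X*Z - α' • (Z*X) + α' • (Z*Y))
      (Y*Z - α' • (Z*Y))
      ↔
      (α' = α) := by
  constructor
  · rintro ⟨e, hspan⟩
    have hmem : ∀ t, t ∈ genSpan (X*Y - Y*X + Y*Y) (X*Z - α • (Z*X) + α • (Z*Y)) (Y*Z - α • (Z*Y)) →
        e t ∈ genSpan (X*Y - Y*X + Y*Y) (X*Z - α' • (Z*X) + α' • (Z*Y)) (Y*Z - α' • (Z*Y)) := by
      intro t ht
      rw [← hspan]
      exact Submodule.mem_map_of_mem ht
    obtain ⟨a1, a2, a3, hA⟩ := mem_span_triple (hmem _ (Submodule.subset_span (Set.mem_insert _ _)))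
    obtain ⟨b1, b2, b3, hB⟩ := mem_span_triple (hmem _ (Submodule.subset_span
      (Set.mem_insert_of_mem _ (Set.mem_insert _ _))))
    obtain ⟨c1, c2, c3, hC⟩ := mem_span_triple (hmem _ (Submodule.subset_span
      (Set.mem_insert_of_mem _ (Set.mem_insert_of_mem _ rfl))))
    have hUA : Tr.Φ α' (e (RingQuot.mkAlgHom ℂ (rel3 (X*Y - Y*X + Y*Y) (X*Z - α • (Z*X) + α • (Z*Y)) (Y*Z - α • (Z*Y))) X))
        = a1 • Tr.gx α' + a2 • Tr.gy α' + a3 • Tr.gz α' := by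
      rw [hA]; simp
    have hUB : Tr.Φ α' (e (RingQuot.mkAlgHom ℂ (rel3 (X*Y - Y*X + Y*Y) (X*Z - α • (Z*X) + α • (Z*Y)) (Y*Z - α • (Z*Y))) Y))
        = b1 • Tr.gx α' + b2 • Tr.gy α' + b3 • Tr.gz α' := by
      rw [hB]; simp
    have hUC : Tr.Φ α' (e (RingQuot.mkAlgHom ℂ (rel3 (X*Y - Y*X + Y*Y) (X*Z - α • (Z*X) + α • (Z*Y)) (Y*Z - α • (Z*Y))) Z))
        = c1 • Tr.gx α' + c2 • Tr.gy α' + c3 • Tr.gz α' := by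
      rw [hC]; simp
    -- relator 1 pushed through e and Φ
    have w1 : rel3 (X*Y - Y*X + Y*Y) (X*Z - α • (Z*X) + α • (Z*Y)) (Y*Z - α • (Z*Y))
        (X*Y - Y*X + Y*Y) 0 := ⟨Or.inl rfl, rfl⟩
    have hz1 : RingQuot.mkAlgHom ℂ (rel3 (X*Y - Y*X + Y*Y) (X*Z - α • (Z*X) + α • (Z*Y)) (Y*Z - α • (Z*Y)))
        (X*Y - Y*X + Y*Y) = 0 := (RingQuot.mkAlgHom_rel ℂ w1).trans (map_zero _)
    have he1 := congrArg (fun t => Tr.Φ α' (e t)) hz1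
    simp only [map_sub, map_add, map_mul, map_zero, hUA, hUB] at he1
    have w3 : rel3 (X*Y - Y*X + Y*Y) (X*Z - α • (Z*X) + α • (Z*Y)) (Y*Z - α • (Z*Y))
        (Y*Z - α • (Z*Y)) 0 := ⟨Or.inr (Or.inr rfl), rfl⟩
    have hz3 : RingQuot.mkAlgHom ℂ (rel3 (X*Y - Y*X + Y*Y) (X*Z - α • (Z*X) + α • (Z*Y)) (Y*Z - α • (Z*Y)))
        (Y*Z - α • (Z*Y)) = 0 := (RingQuot.mkAlgHom_rel ℂ w3).trans (map_zero _)
    have he3 := congrArg (fun t => Tr.Φ α' (e t)) hz3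
    simp only [map_sub, map_add, map_mul, map_smul, map_zero, hUB, hUC] at he3
    -- component equations from relator 1
    have Exx := congrArg Tr.xx he1
    have Ezz := congrArg Tr.zz he1
    have Ezy1 := congrArg Tr.zy he1
    simp [Tr.gx, Tr.gy, Tr.gz] at Exx Ezz Ezy1
    have hb1 : b1 = 0 := by
      have h2 : b1 * b1 = 0 := by first | linear_combination Exx | linear_combination -Exx
      exact mul_self_eq_zero.mp h2
    have hb3 : b3 = 0 := by
      have h2 : b3 * b3 = 0 := by first | linear_combination Ezz | linear_combination -Ezz
      exact mul_self_eq_zero.mp h2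
    subst hb1 hb3
    have Ea3 : a3 * b2 * (1 - α') = 0 := by
      first | linear_combination Ezy1 | linear_combination -Ezy1
    -- component equations from relator 3
    have Eyx3 := congrArg Tr.yx he3
    have Ezy3 := congrArg Tr.zy he3
    simp [Tr.gx, Tr.gy, Tr.gz] at Eyx3 Ezy3
    have Ec1 : b2 * c1 * (1 - α) = 0 := by
      first | linear_combination Eyx3 | linear_combination -Eyx3
    have Ec3 : b2 * c3 * (α' - α) = 0 := by
      first | linear_combination Ezy3 | linear_combination -Ezy3
    -- inverse direction: invertibility of the coefficient matrix
    have hinv : ∀ t ∈ genSpan (X*Y - Y*X + Y*Y) (X*Z - α' • (Z*X) + α' • (Z*Y)) (Y*Z - α' • (Z*Y)),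
        ∃ s, s ∈ genSpan (X*Y - Y*X + Y*Y) (X*Z - α • (Z*X) + α • (Z*Y)) (Y*Z - α • (Z*Y)) ∧ e s = t := by
      intro t ht
      rw [← hspan] at ht
      obtain ⟨s, hs, hes⟩ := ht
      exact ⟨s, hs, hes⟩
    obtain ⟨tX, htX, hetX⟩ := hinv _ (Submodule.subset_span (Set.mem_insert _ _))
    obtain ⟨tY, htY, hetY⟩ := hinv _ (Submodule.subset_span
      (Set.mem_insert_of_mem _ (Set.mem_insert _ _)))
    obtain ⟨tZ, htZ, hetZ⟩ := hinv _ (Submodule.subset_span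
      (Set.mem_insert_of_mem _ (Set.mem_insert_of_mem _ rfl)))
    obtain ⟨d11, d12, d13, hDX⟩ := mem_span_triple htX
    obtain ⟨d21, d22, d23, hDY⟩ := mem_span_triple htY
    obtain ⟨d31, d32, d33, hDZ⟩ := mem_span_triple htZ
    have hX' : Tr.gx α' = d11 • (a1 • Tr.gx α' + a2 • Tr.gy α' + a3 • Tr.gz α')
        + d12 • ((0:ℂ) • Tr.gx α' + b2 • Tr.gy α' + (0:ℂ) • Tr.gz α')
        + d13 • (c1 • Tr.gx α' + c2 • Tr.gy α' + c3 • Tr.gz α') := by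
      have h2 : Tr.Φ α' (e tX) = Tr.gx α' := by rw [hetX]; simp
      rw [hDX] at h2
      simp only [map_add, map_smul, hUA, hUB, hUC] at h2
      exact h2.symm
    have hY' : Tr.gy α' = d21 • (a1 • Tr.gx α' + a2 • Tr.gy α' + a3 • Tr.gz α')
        + d22 • ((0:ℂ) • Tr.gx α' + b2 • Tr.gy α' + (0:ℂ) • Tr.gz α')
        + d23 • (c1 • Tr.gx α' + c2 • Tr.gy α' + c3 • Tr.gz α') := by
      have h2 : Tr.Φ α' (e tY) = Tr.gy α' := by rw [hetY]; simp
      rw [hDY] at h2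
      simp only [map_add, map_smul, hUA, hUB, hUC] at h2
      exact h2.symm
    have hZ' : Tr.gz α' = d31 • (a1 • Tr.gx α' + a2 • Tr.gy α' + a3 • Tr.gz α')
        + d32 • ((0:ℂ) • Tr.gx α' + b2 • Tr.gy α' + (0:ℂ) • Tr.gz α')
        + d33 • (c1 • Tr.gx α' + c2 • Tr.gy α' + c3 • Tr.gz α') := by
      have h2 : Tr.Φ α' (e tZ) = Tr.gz α' := by rw [hetZ]; simp
      rw [hDZ] at h2
      simp only [map_add, map_smul, hUA, hUB, hUC] at h2
      exact h2.symm
    have E11 := congrArg Tr.x hX'; have E12 := congrArg Tr.y hX'; have E13 := congrArg Tr.z hX'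
    have E21 := congrArg Tr.x hY'; have E22 := congrArg Tr.y hY'; have E23 := congrArg Tr.z hY'
    have E31 := congrArg Tr.x hZ'; have E32 := congrArg Tr.y hZ'; have E33 := congrArg Tr.z hZ'
    simp [Tr.gx, Tr.gy, Tr.gz] at E11 E12 E13 E21 E22 E23 E31 E32 E33
    have F11 : d11*a1 + d13*c1 = 1 := by
      first | linear_combination E11 | linear_combination -E11
    have F12 : d11*a2 + d12*b2 + d13*c2 = 0 := by
      first | linear_combination E12 | linear_combination -E12
    have F13 : d11*a3 + d13*c3 = 0 := by
      first | linear_combination E13 | linear_combination -E13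
    have F21 : d21*a1 + d23*c1 = 0 := by
      first | linear_combination E21 | linear_combination -E21
    have F22 : d21*a2 + d22*b2 + d23*c2 = 1 := by
      first | linear_combination E22 | linear_combination -E22
    have F23 : d21*a3 + d23*c3 = 0 := by
      first | linear_combination E23 | linear_combination -E23
    have F31 : d31*a1 + d33*c1 = 0 := by
      first | linear_combination E31 | linear_combination -E31
    have F32 : d31*a2 + d32*b2 + d33*c2 = 0 := by
      first | linear_combination E32 | linear_combination -E32
    have F33 : d31*a3 + d33*c3 = 1 := by
      first | linear_combination E33 | linear_combination -E33
    have hDM : (!![d11,d12,d13;d21,d22,d23;d31,d32,d33] : Matrix (Fin 3) (Fin 3) ℂ) *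
        !![a1,a2,a3;(0:ℂ),b2,0;c1,c2,c3] = 1 := by
      rw [Matrix.mul_fin_three, Matrix.one_fin_three]
      ext i j
      fin_cases i <;> fin_cases j <;> simp [Matrix.vecHead, Matrix.vecTail] <;>
        first
          | linear_combination F11 | linear_combination F12 | linear_combination F13
          | linear_combination F21 | linear_combination F22 | linear_combination F23
          | linear_combination F31 | linear_combination F32 | linear_combination F33
    have hdet1 : (!![d11,d12,d13;d21,d22,d23;d31,d32,d33] : Matrix (Fin 3) (Fin 3) ℂ).det *
        (!![a1,a2,a3;(0:ℂ),b2,0;c1,c2,c3] : Matrix (Fin 3) (Fin 3) ℂ).det = 1 := by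
      rw [← Matrix.det_mul, hDM, Matrix.det_one]
    have hdetM : (!![a1,a2,a3;(0:ℂ),b2,0;c1,c2,c3] : Matrix (Fin 3) (Fin 3) ℂ).det ≠ 0 := by
      intro h0
      rw [h0, mul_zero] at hdet1
      exact zero_ne_one hdet1
    have hdetval : (!![a1,a2,a3;(0:ℂ),b2,0;c1,c2,c3] : Matrix (Fin 3) (Fin 3) ℂ).det
        = b2 * (a1*c3 - a3*c1) := by
      rw [Matrix.det_fin_three]
      simp
      ring
    rw [hdetval] at hdetM
    obtain ⟨hb2, hfac⟩ := mul_ne_zero_iff.mp hdetM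
    -- endgame
    by_contra hne
    have hsubne : α' - α ≠ 0 := sub_ne_zero_of_ne hne
    have hc3 : c3 = 0 := by
      rcases mul_eq_zero.mp Ec3 with h0 | h0
      · rcases mul_eq_zero.mp h0 with h1 | h1
        · exact absurd h1 hb2
        · exact h1
      · exact absurd h0 hsubne
    rw [hc3] at hfac
    have ha3c1 : a3 * c1 ≠ 0 := by
      intro h0
      apply hfac
      linear_combination -h0
    obtain ⟨ha3, hc1⟩ := mul_ne_zero_iff.mp ha3c1
    have hα'1 : α' = 1 := by
      rcases mul_eq_zero.mp Ea3 with h0 | h0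
      · rcases mul_eq_zero.mp h0 with h1 | h1
        · exact absurd h1 ha3
        · exact absurd h1 hb2
      · linear_combination -h0
    have hα1 : α = 1 := by
      rcases mul_eq_zero.mp Ec1 with h0 | h0
      · rcases mul_eq_zero.mp h0 with h1 | h1
        · exact absurd h1 hb2
        · exact absurd h1 hc1
      · linear_combination -h0
    exact hne (hα'1.trans hα1.symm)
  · rintro rfl
    refine ⟨AlgEquiv.refl, ?_⟩
    rw [show (AlgEquiv.refl : QuadAlg _ _ _ ≃ₐ[ℂ] _).toLinearMap = LinearMap.id from rfl,
      Submodule.map_id]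
end
end

section
/- (Type S₁) For α, β, γ ∈ ℂ with αβγ ≠ 0 and αβγ ≠ 1, let A(α,β,γ) = ℂ⟨x,y,z⟩/(yz − αzy, zx − βxz, xy − γyx). For α', β', γ' ∈ ℂ with α'β'γ' ≠ 0 and α'β'γ' ≠ 1, the algebras A(α,β,γ) and A(α',β',γ') are isomorphic as graded algebras if and only if (α',β',γ') is one of the six triples (α,β,γ), (β,γ,α), (γ,α,β), (α⁻¹,γ⁻¹,β⁻¹), (β⁻¹,α⁻¹,γ⁻¹), (γ⁻¹,β⁻¹,α⁻¹). -/
noncomputable section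

/-! representation -/

abbrev V3 : Type := (ℕ × ℕ × ℕ) →₀ ℂ
def wsh (s : ℕ × ℕ × ℕ → ℂ) (σ : ℕ × ℕ × ℕ → ℕ × ℕ × ℕ) : V3 →ₗ[ℂ] V3 :=
  Finsupp.lsum ℂ (fun m => s m • Finsupp.lsingle (σ m))
lemma wsh_single (s : ℕ × ℕ × ℕ → ℂ) (σ : ℕ × ℕ × ℕ → ℕ × ℕ × ℕ) (m : ℕ × ℕ × ℕ) (c : ℂ) :
    wsh s σ (Finsupp.single m c) = s m • Finsupp.single (σ m) c := by
  simp [wsh]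
def Xop : Module.End ℂ V3 := wsh (fun _ => 1) (fun m => (m.1 + 1, m.2.1, m.2.2))
def Yop (c : ℂ) : Module.End ℂ V3 := wsh (fun m => c⁻¹ ^ m.1) (fun m => (m.1, m.2.1 + 1, m.2.2))
def Zop (a b : ℂ) : Module.End ℂ V3 :=
  wsh (fun m => a⁻¹ ^ m.2.1 * b ^ m.1) (fun m => (m.1, m.2.1, m.2.2 + 1))

@[simp] lemma Xop_single (m : ℕ × ℕ × ℕ) (x : ℂ) :
    Xop (Finsupp.single m x) = Finsupp.single (m.1 + 1, m.2.1, m.2.2) x := by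
  simp [Xop, wsh_single]
@[simp] lemma Yop_single (c : ℂ) (m : ℕ × ℕ × ℕ) (x : ℂ) :
    Yop c (Finsupp.single m x) = Finsupp.single (m.1, m.2.1 + 1, m.2.2) (c⁻¹ ^ m.1 * x) := by
  simp [Yop, wsh_single, Finsupp.smul_single, smul_eq_mul]
@[simp] lemma Zop_single (a b : ℂ) (m : ℕ × ℕ × ℕ) (x : ℂ) :
    Zop a b (Finsupp.single m x)
      = Finsupp.single (m.1, m.2.1, m.2.2 + 1) (a⁻¹ ^ m.2.1 * b ^ m.1 * x) := by
  simp [Zop, wsh_single, Finsupp.smul_single, smul_eq_mul, mul_assoc]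

lemma relYZ (a b c : ℂ) (ha : a ≠ 0) :
    Yop c * Zop a b - a • (Zop a b * Yop c) = 0 := by
  apply Finsupp.lhom_ext
  intro m x
  simp only [LinearMap.sub_apply, LinearMap.smul_apply, Module.End.mul_apply,
    LinearMap.zero_apply, Xop_single, Yop_single, Zop_single, Finsupp.smul_single, smul_eq_mul]
  rw [sub_eq_zero]
  congr 1
  rw [pow_succ]
  linear_combination (-(c⁻¹ ^ m.1 * a⁻¹ ^ m.2.1 * b ^ m.1 * x)) * mul_inv_cancel₀ ha

lemma relZX (a b c : ℂ) :
    Zop a b * Xop - b • (Xop * Zop a b) = 0 := by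
  apply Finsupp.lhom_ext
  intro m x
  simp only [LinearMap.sub_apply, LinearMap.smul_apply, Module.End.mul_apply,
    LinearMap.zero_apply, Xop_single, Yop_single, Zop_single, Finsupp.smul_single, smul_eq_mul]
  rw [sub_eq_zero]
  congr 1
  rw [pow_succ]
  ring

lemma relXY (a b c : ℂ) (hc : c ≠ 0) :
    Xop * Yop c - c • (Yop c * Xop) = 0 := by
  apply Finsupp.lhom_ext
  intro m x
  simp only [LinearMap.sub_apply, LinearMap.smul_apply, Module.End.mul_apply,
    LinearMap.zero_apply, Xop_single, Yop_single, Zop_single, Finsupp.smul_single, smul_eq_mul]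
  rw [sub_eq_zero]
  congr 1
  rw [pow_succ]
  linear_combination (-(c⁻¹ ^ m.1 * x)) * mul_inv_cancel₀ hc

/-- the free-algebra representation -/
def frep (a b c : ℂ) : F3 →ₐ[ℂ] Module.End ℂ V3 :=
  FreeAlgebra.lift ℂ ![Xop, Yop c, Zop a b]

@[simp] lemma frep_X (a b c : ℂ) : frep a b c X = Xop := by
  simp [frep, X]
@[simp] lemma frep_Y (a b c : ℂ) : frep a b c Y = Yop c := by
  simp [frep, Y]
@[simp] lemma frep_Z (a b c : ℂ) : frep a b c Z = Zop a b := by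
  simp [frep, Z]

lemma frep_rel {a b c : ℂ} (ha : a ≠ 0) (hb : b ≠ 0) (hc : c ≠ 0) :
    ∀ ⦃u v : F3⦄, rel3 (Y*Z - a • (Z*Y)) (Z*X - b • (X*Z)) (X*Y - c • (Y*X)) u v →
      frep a b c u = frep a b c v := by
  rintro u v ⟨(h | h | h), rfl⟩ <;> subst h <;>
    simp only [map_sub, map_mul, map_smul, frep_X, frep_Y, frep_Z, map_zero]
  · exact relYZ a b c ha
  · exact relZX a b c
  · exact relXY a b c hc

/-- the representation of the quotient -/
def qrep {a b c : ℂ} (ha : a ≠ 0) (hb : b ≠ 0) (hc : c ≠ 0) :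
    QuadAlg (Y*Z - a • (Z*Y)) (Z*X - b • (X*Z)) (X*Y - c • (Y*X)) →ₐ[ℂ] Module.End ℂ V3 :=
  RingQuot.liftAlgHom ℂ ⟨frep a b c, frep_rel ha hb hc⟩

local notation "mk" => RingQuot.mkAlgHom ℂ

@[simp] lemma qrep_X {a b c : ℂ} (ha : a ≠ 0) (hb : b ≠ 0) (hc : c ≠ 0) :
    qrep ha hb hc (mk (rel3 (Y*Z - a • (Z*Y)) (Z*X - b • (X*Z)) (X*Y - c • (Y*X))) X) = Xop := by
  simp [qrep, RingQuot.liftAlgHom_mkAlgHom_apply]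
@[simp] lemma qrep_Y {a b c : ℂ} (ha : a ≠ 0) (hb : b ≠ 0) (hc : c ≠ 0) :
    qrep ha hb hc (mk (rel3 (Y*Z - a • (Z*Y)) (Z*X - b • (X*Z)) (X*Y - c • (Y*X))) Y) = Yop c := by
  simp [qrep, RingQuot.liftAlgHom_mkAlgHom_apply]
@[simp] lemma qrep_Z {a b c : ℂ} (ha : a ≠ 0) (hb : b ≠ 0) (hc : c ≠ 0) :
    qrep ha hb hc (mk (rel3 (Y*Z - a • (Z*Y)) (Z*X - b • (X*Z)) (X*Y - c • (Y*X))) Z) = Zop a b := by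
  simp [qrep, RingQuot.liftAlgHom_mkAlgHom_apply]

-- extraction lemmas, appended to c.lean content
variable {a b c : ℂ}

lemma ext3 (ha : a ≠ 0) (hb : b ≠ 0) (hc : c ≠ 0) (d1 d2 d3 : ℂ)
    (h : d1 • (mk (rel3 (Y*Z - a • (Z*Y)) (Z*X - b • (X*Z)) (X*Y - c • (Y*X))) X)
       + d2 • (mk (rel3 (Y*Z - a • (Z*Y)) (Z*X - b • (X*Z)) (X*Y - c • (Y*X))) Y)
       + d3 • (mk (rel3 (Y*Z - a • (Z*Y)) (Z*X - b • (X*Z)) (X*Y - c • (Y*X))) Z) = 0) :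
    d1 = 0 ∧ d2 = 0 ∧ d3 = 0 := by
  have h2 := congrArg (fun u => (qrep ha hb hc u) (Finsupp.single ((0:ℕ),(0:ℕ),(0:ℕ)) (1:ℂ))) h
  simp only [map_add, map_smul, map_zero, qrep_X, qrep_Y, qrep_Z, LinearMap.add_apply,
    LinearMap.smul_apply, LinearMap.zero_apply, Xop_single, Yop_single, Zop_single,
    Finsupp.smul_single, smul_eq_mul, pow_zero, one_mul, mul_one] at h2
  refine ⟨?_, ?_, ?_⟩
  · simpa [Finsupp.single_apply, Prod.ext_iff] using DFunLike.congr_fun h2 ((1:ℕ),(0:ℕ),(0:ℕ))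
  · simpa [Finsupp.single_apply, Prod.ext_iff] using DFunLike.congr_fun h2 ((0:ℕ),(1:ℕ),(0:ℕ))
  · simpa [Finsupp.single_apply, Prod.ext_iff] using DFunLike.congr_fun h2 ((0:ℕ),(0:ℕ),(1:ℕ))

lemma ext6 (ha : a ≠ 0) (hb : b ≠ 0) (hc : c ≠ 0)
    (c11 c12 c13 c21 c22 c23 c31 c32 c33 : ℂ)
    (h : c11 • ((mk (rel3 (Y*Z - a • (Z*Y)) (Z*X - b • (X*Z)) (X*Y - c • (Y*X))) X) * (mk (rel3 (Y*Z - a • (Z*Y)) (Z*X - b • (X*Z)) (X*Y - c • (Y*X))) X))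
       + c12 • ((mk (rel3 (Y*Z - a • (Z*Y)) (Z*X - b • (X*Z)) (X*Y - c • (Y*X))) X) * (mk (rel3 (Y*Z - a • (Z*Y)) (Z*X - b • (X*Z)) (X*Y - c • (Y*X))) Y))
       + c13 • ((mk (rel3 (Y*Z - a • (Z*Y)) (Z*X - b • (X*Z)) (X*Y - c • (Y*X))) X) * (mk (rel3 (Y*Z - a • (Z*Y)) (Z*X - b • (X*Z)) (X*Y - c • (Y*X))) Z))
       + c21 • ((mk (rel3 (Y*Z - a • (Z*Y)) (Z*X - b • (X*Z)) (X*Y - c • (Y*X))) Y) * (mk (rel3 (Y*Z - a • (Z*Y)) (Z*X - b • (X*Z)) (X*Y - c • (Y*X))) X))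
       + c22 • ((mk (rel3 (Y*Z - a • (Z*Y)) (Z*X - b • (X*Z)) (X*Y - c • (Y*X))) Y) * (mk (rel3 (Y*Z - a • (Z*Y)) (Z*X - b • (X*Z)) (X*Y - c • (Y*X))) Y))
       + c23 • ((mk (rel3 (Y*Z - a • (Z*Y)) (Z*X - b • (X*Z)) (X*Y - c • (Y*X))) Y) * (mk (rel3 (Y*Z - a • (Z*Y)) (Z*X - b • (X*Z)) (X*Y - c • (Y*X))) Z))
       + c31 • ((mk (rel3 (Y*Z - a • (Z*Y)) (Z*X - b • (X*Z)) (X*Y - c • (Y*X))) Z) * (mk (rel3 (Y*Z - a • (Z*Y)) (Z*X - b • (X*Z)) (X*Y - c • (Y*X))) X))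
       + c32 • ((mk (rel3 (Y*Z - a • (Z*Y)) (Z*X - b • (X*Z)) (X*Y - c • (Y*X))) Z) * (mk (rel3 (Y*Z - a • (Z*Y)) (Z*X - b • (X*Z)) (X*Y - c • (Y*X))) Y))
       + c33 • ((mk (rel3 (Y*Z - a • (Z*Y)) (Z*X - b • (X*Z)) (X*Y - c • (Y*X))) Z) * (mk (rel3 (Y*Z - a • (Z*Y)) (Z*X - b • (X*Z)) (X*Y - c • (Y*X))) Z)) = 0) :
    c11 = 0 ∧ c22 = 0 ∧ c33 = 0 ∧ c12 + c⁻¹ * c21 = 0 ∧ c13 + b * c31 = 0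
      ∧ c23 + a⁻¹ * c32 = 0 := by
  have h2 := congrArg (fun u => (qrep ha hb hc u) (Finsupp.single ((0:ℕ),(0:ℕ),(0:ℕ)) (1:ℂ))) h
  simp only [map_add, map_smul, map_mul, map_zero, qrep_X, qrep_Y, qrep_Z, LinearMap.add_apply,
    LinearMap.smul_apply, Module.End.mul_apply, LinearMap.zero_apply, Xop_single, Yop_single,
    Zop_single, Finsupp.smul_single, smul_eq_mul, pow_zero, pow_one, one_mul, mul_one] at h2
  refine ⟨?_, ?_, ?_, ?_, ?_, ?_⟩
  · simpa [Finsupp.single_apply, Prod.ext_iff] using DFunLike.congr_fun h2 ((2:ℕ),(0:ℕ),(0:ℕ))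
  · simpa [Finsupp.single_apply, Prod.ext_iff] using DFunLike.congr_fun h2 ((0:ℕ),(2:ℕ),(0:ℕ))
  · simpa [Finsupp.single_apply, Prod.ext_iff] using DFunLike.congr_fun h2 ((0:ℕ),(0:ℕ),(2:ℕ))
  · have := DFunLike.congr_fun h2 ((1:ℕ),(1:ℕ),(0:ℕ))
    simp [Finsupp.single_apply, Prod.ext_iff] at this
    linear_combination this
  · have := DFunLike.congr_fun h2 ((1:ℕ),(0:ℕ),(1:ℕ))
    simp [Finsupp.single_apply, Prod.ext_iff] at this
    linear_combination this
  · have := DFunLike.congr_fun h2 ((0:ℕ),(1:ℕ),(1:ℕ))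
    simp [Finsupp.single_apply, Prod.ext_iff] at this
    linear_combination this

-- backward direction machinery (appended after c.lean)

lemma mem_span_triple_s5 {M : Type*} [AddCommGroup M] [Module ℂ M] {x v1 v2 v3 : M} :
    x ∈ Submodule.span ℂ ({v1, v2, v3} : Set M) ↔ ∃ a b c : ℂ, a • v1 + b • v2 + c • v3 = x := by
  constructor
  · intro hx
    rw [Submodule.mem_span_insert] at hx
    obtain ⟨a, w, hw, rfl⟩ := hx
    rw [Submodule.mem_span_pair] at hw
    obtain ⟨b, c, rfl⟩ := hw
    exact ⟨a, b, c, by abel⟩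
  · rintro ⟨a, b, c, rfl⟩
    exact Submodule.add_mem _ (Submodule.add_mem _
      (Submodule.smul_mem _ _ (Submodule.subset_span (by simp)))
      (Submodule.smul_mem _ _ (Submodule.subset_span (by simp))))
      (Submodule.smul_mem _ _ (Submodule.subset_span (by simp)))

section qhom

variable {f₁ f₂ f₃ g₁ g₂ g₃ : F3}

lemma lift_rel1 {A : Type*} [Ring A] [Algebra ℂ A] (u1 u2 u3 : A) (a : ℂ) :
    FreeAlgebra.lift ℂ ![u1, u2, u3] (Y*Z - a • (Z*Y)) = u2*u3 - a • (u3*u2) := by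
  simp [X, Y, Z]

lemma lift_rel2 {A : Type*} [Ring A] [Algebra ℂ A] (u1 u2 u3 : A) (b : ℂ) :
    FreeAlgebra.lift ℂ ![u1, u2, u3] (Z*X - b • (X*Z)) = u3*u1 - b • (u1*u3) := by
  simp [X, Y, Z]

lemma lift_rel3 {A : Type*} [Ring A] [Algebra ℂ A] (u1 u2 u3 : A) (c : ℂ) :
    FreeAlgebra.lift ℂ ![u1, u2, u3] (X*Y - c • (Y*X)) = u1*u2 - c • (u2*u1) := by
  simp [X, Y, Z]

def qhom (u1 u2 u3 : QuadAlg g₁ g₂ g₃)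
    (h1 : FreeAlgebra.lift ℂ ![u1, u2, u3] f₁ = 0)
    (h2 : FreeAlgebra.lift ℂ ![u1, u2, u3] f₂ = 0)
    (h3 : FreeAlgebra.lift ℂ ![u1, u2, u3] f₃ = 0) :
    QuadAlg f₁ f₂ f₃ →ₐ[ℂ] QuadAlg g₁ g₂ g₃ :=
  RingQuot.liftAlgHom ℂ ⟨FreeAlgebra.lift ℂ ![u1, u2, u3], by
    rintro x y ⟨(rfl | rfl | rfl), rfl⟩ <;> simp [h1, h2, h3]⟩

@[simp] lemma qhom_mkX (u1 u2 u3 : QuadAlg g₁ g₂ g₃) (h1 h2 h3) :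
    qhom (f₁ := f₁) (f₂ := f₂) (f₃ := f₃) u1 u2 u3 h1 h2 h3 (mk (rel3 f₁ f₂ f₃) X) = u1 := by
  simp [qhom, RingQuot.liftAlgHom_mkAlgHom_apply, X]

@[simp] lemma qhom_mkY (u1 u2 u3 : QuadAlg g₁ g₂ g₃) (h1 h2 h3) :
    qhom (f₁ := f₁) (f₂ := f₂) (f₃ := f₃) u1 u2 u3 h1 h2 h3 (mk (rel3 f₁ f₂ f₃) Y) = u2 := by
  simp [qhom, RingQuot.liftAlgHom_mkAlgHom_apply, Y]

@[simp] lemma qhom_mkZ (u1 u2 u3 : QuadAlg g₁ g₂ g₃) (h1 h2 h3) :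
    qhom (f₁ := f₁) (f₂ := f₂) (f₃ := f₃) u1 u2 u3 h1 h2 h3 (mk (rel3 f₁ f₂ f₃) Z) = u3 := by
  simp [qhom, RingQuot.liftAlgHom_mkAlgHom_apply, Z]

@[simp] lemma qhom_mkι0 (u1 u2 u3 : QuadAlg g₁ g₂ g₃) (h1 h2 h3) :
    qhom (f₁ := f₁) (f₂ := f₂) (f₃ := f₃) u1 u2 u3 h1 h2 h3
      (mk (rel3 f₁ f₂ f₃) (FreeAlgebra.ι ℂ 0)) = u1 := qhom_mkX u1 u2 u3 h1 h2 h3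

@[simp] lemma qhom_mkι1 (u1 u2 u3 : QuadAlg g₁ g₂ g₃) (h1 h2 h3) :
    qhom (f₁ := f₁) (f₂ := f₂) (f₃ := f₃) u1 u2 u3 h1 h2 h3
      (mk (rel3 f₁ f₂ f₃) (FreeAlgebra.ι ℂ 1)) = u2 := qhom_mkY u1 u2 u3 h1 h2 h3

@[simp] lemma qhom_mkι2 (u1 u2 u3 : QuadAlg g₁ g₂ g₃) (h1 h2 h3) :
    qhom (f₁ := f₁) (f₂ := f₂) (f₃ := f₃) u1 u2 u3 h1 h2 h3
      (mk (rel3 f₁ f₂ f₃) (FreeAlgebra.ι ℂ 2)) = u3 := qhom_mkZ u1 u2 u3 h1 h2 h3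

/-- the three defining relations hold in the quotient -/
lemma qrel1 (f₂ f₃ : F3) (a : ℂ) (f₁eq : f₁ = Y*Z - a • (Z*Y)) :
    (mk (rel3 f₁ f₂ f₃) Y) * (mk (rel3 f₁ f₂ f₃) Z)
      - a • ((mk (rel3 f₁ f₂ f₃) Z) * (mk (rel3 f₁ f₂ f₃) Y)) = 0 := by
  have h := RingQuot.mkAlgHom_rel ℂ (s := rel3 f₁ f₂ f₃) (⟨Or.inl rfl, rfl⟩ : rel3 f₁ f₂ f₃ f₁ 0)
  subst f₁eq
  simpa [map_sub, map_mul, map_smul] using h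

lemma qrel2 (f₁ f₃ : F3) (b : ℂ) (f₂eq : f₂ = Z*X - b • (X*Z)) :
    (mk (rel3 f₁ f₂ f₃) Z) * (mk (rel3 f₁ f₂ f₃) X)
      - b • ((mk (rel3 f₁ f₂ f₃) X) * (mk (rel3 f₁ f₂ f₃) Z)) = 0 := by
  have h := RingQuot.mkAlgHom_rel ℂ (s := rel3 f₁ f₂ f₃) (⟨Or.inr (Or.inl rfl), rfl⟩ : rel3 f₁ f₂ f₃ f₂ 0)
  subst f₂eq
  simpa [map_sub, map_mul, map_smul] using h

lemma qrel3 (f₁ f₂ : F3) (c : ℂ) (f₃eq : f₃ = X*Y - c • (Y*X)) :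
    (mk (rel3 f₁ f₂ f₃) X) * (mk (rel3 f₁ f₂ f₃) Y)
      - c • ((mk (rel3 f₁ f₂ f₃) Y) * (mk (rel3 f₁ f₂ f₃) X)) = 0 := by
  have h := RingQuot.mkAlgHom_rel ℂ (s := rel3 f₁ f₂ f₃) (⟨Or.inr (Or.inr rfl), rfl⟩ : rel3 f₁ f₂ f₃ f₃ 0)
  subst f₃eq
  simpa [map_sub, map_mul, map_smul] using h

end qhom

-- the explicit equivalences (backward direction)

section equivs
variable (a b c : ℂ)

/-- cyclic map -/
def cycHom (a b c : ℂ) :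
    QuadAlg (Y*Z - a • (Z*Y)) (Z*X - b • (X*Z)) (X*Y - c • (Y*X)) →ₐ[ℂ]
    QuadAlg (Y*Z - b • (Z*Y)) (Z*X - c • (X*Z)) (X*Y - a • (Y*X)) :=
  qhom (mk (rel3 (Y*Z - b • (Z*Y)) (Z*X - c • (X*Z)) (X*Y - a • (Y*X))) Z)
       (mk (rel3 (Y*Z - b • (Z*Y)) (Z*X - c • (X*Z)) (X*Y - a • (Y*X))) X)
       (mk (rel3 (Y*Z - b • (Z*Y)) (Z*X - c • (X*Z)) (X*Y - a • (Y*X))) Y)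
    (by rw [lift_rel1]; exact qrel3 _ _ a rfl)
    (by rw [lift_rel2]; exact qrel1 _ _ b rfl)
    (by rw [lift_rel3]; exact qrel2 _ _ c rfl)

def cycInvHom (a b c : ℂ) :
    QuadAlg (Y*Z - b • (Z*Y)) (Z*X - c • (X*Z)) (X*Y - a • (Y*X)) →ₐ[ℂ]
    QuadAlg (Y*Z - a • (Z*Y)) (Z*X - b • (X*Z)) (X*Y - c • (Y*X)) :=
  qhom (mk (rel3 (Y*Z - a • (Z*Y)) (Z*X - b • (X*Z)) (X*Y - c • (Y*X))) Y)
       (mk (rel3 (Y*Z - a • (Z*Y)) (Z*X - b • (X*Z)) (X*Y - c • (Y*X))) Z)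
       (mk (rel3 (Y*Z - a • (Z*Y)) (Z*X - b • (X*Z)) (X*Y - c • (Y*X))) X)
    (by rw [lift_rel1]; exact qrel2 _ _ b rfl)
    (by rw [lift_rel2]; exact qrel3 _ _ c rfl)
    (by rw [lift_rel3]; exact qrel1 _ _ a rfl)

def cycEquiv (a b c : ℂ) :
    QuadAlg (Y*Z - a • (Z*Y)) (Z*X - b • (X*Z)) (X*Y - c • (Y*X)) ≃ₐ[ℂ]
    QuadAlg (Y*Z - b • (Z*Y)) (Z*X - c • (X*Z)) (X*Y - a • (Y*X)) :=
  AlgEquiv.ofAlgHom (cycHom a b c) (cycInvHom a b c)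
    (by
      refine RingQuot.ringQuot_ext' (S := ℂ) _ _ ?_
      refine FreeAlgebra.hom_ext ?_
      funext i
      fin_cases i <;> simp [cycHom, cycInvHom, show FreeAlgebra.ι ℂ (⟨0, by omega⟩ : Fin 3) = X from rfl, show FreeAlgebra.ι ℂ (⟨1, by omega⟩ : Fin 3) = Y from rfl, show FreeAlgebra.ι ℂ (⟨2, by omega⟩ : Fin 3) = Z from rfl] <;> rfl)
    (by
      refine RingQuot.ringQuot_ext' (S := ℂ) _ _ ?_
      refine FreeAlgebra.hom_ext ?_
      funext i
      fin_cases i <;> simp [cycHom, cycInvHom, show FreeAlgebra.ι ℂ (⟨0, by omega⟩ : Fin 3) = X from rfl, show FreeAlgebra.ι ℂ (⟨1, by omega⟩ : Fin 3) = Y from rfl, show FreeAlgebra.ι ℂ (⟨2, by omega⟩ : Fin 3) = Z from rfl] <;> rfl)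

/-- inversion map -/
def invHom (a b c : ℂ) (ha : a ≠ 0) (hb : b ≠ 0) (hc : c ≠ 0) :
    QuadAlg (Y*Z - a • (Z*Y)) (Z*X - b • (X*Z)) (X*Y - c • (Y*X)) →ₐ[ℂ]
    QuadAlg (Y*Z - a⁻¹ • (Z*Y)) (Z*X - c⁻¹ • (X*Z)) (X*Y - b⁻¹ • (Y*X)) :=
  qhom (mk (rel3 (Y*Z - a⁻¹ • (Z*Y)) (Z*X - c⁻¹ • (X*Z)) (X*Y - b⁻¹ • (Y*X))) X)
       (mk (rel3 (Y*Z - a⁻¹ • (Z*Y)) (Z*X - c⁻¹ • (X*Z)) (X*Y - b⁻¹ • (Y*X))) Z)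
       (mk (rel3 (Y*Z - a⁻¹ • (Z*Y)) (Z*X - c⁻¹ • (X*Z)) (X*Y - b⁻¹ • (Y*X))) Y)
    (by
      rw [lift_rel1]
      have h := qrel1 (Z*X - c⁻¹ • (X*Z)) (X*Y - b⁻¹ • (Y*X)) a⁻¹ rfl
      rw [sub_eq_zero] at h
      rw [h, smul_smul, mul_inv_cancel₀ ha, one_smul, sub_self])
    (by
      rw [lift_rel2]
      have h := qrel3 (Y*Z - a⁻¹ • (Z*Y)) (Z*X - c⁻¹ • (X*Z)) b⁻¹ rfl
      rw [sub_eq_zero] at h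
      rw [h, smul_smul, mul_inv_cancel₀ hb, one_smul, sub_self])
    (by
      rw [lift_rel3]
      have h := qrel2 (Y*Z - a⁻¹ • (Z*Y)) (X*Y - b⁻¹ • (Y*X)) c⁻¹ rfl
      rw [sub_eq_zero] at h
      rw [h, smul_smul, mul_inv_cancel₀ hc, one_smul, sub_self])

def invInvHom (a b c : ℂ) (ha : a ≠ 0) (hb : b ≠ 0) (hc : c ≠ 0) :
    QuadAlg (Y*Z - a⁻¹ • (Z*Y)) (Z*X - c⁻¹ • (X*Z)) (X*Y - b⁻¹ • (Y*X)) →ₐ[ℂ]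
    QuadAlg (Y*Z - a • (Z*Y)) (Z*X - b • (X*Z)) (X*Y - c • (Y*X)) :=
  qhom (mk (rel3 (Y*Z - a • (Z*Y)) (Z*X - b • (X*Z)) (X*Y - c • (Y*X))) X)
       (mk (rel3 (Y*Z - a • (Z*Y)) (Z*X - b • (X*Z)) (X*Y - c • (Y*X))) Z)
       (mk (rel3 (Y*Z - a • (Z*Y)) (Z*X - b • (X*Z)) (X*Y - c • (Y*X))) Y)
    (by
      rw [lift_rel1]
      have h := qrel1 (Z*X - b • (X*Z)) (X*Y - c • (Y*X)) a rfl
      rw [sub_eq_zero] at h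
      rw [h, smul_smul, inv_mul_cancel₀ ha, one_smul, sub_self])
    (by
      rw [lift_rel2]
      have h := qrel3 (Y*Z - a • (Z*Y)) (Z*X - b • (X*Z)) c rfl
      rw [sub_eq_zero] at h
      rw [h, smul_smul, inv_mul_cancel₀ hc, one_smul, sub_self])
    (by
      rw [lift_rel3]
      have h := qrel2 (Y*Z - a • (Z*Y)) (X*Y - c • (Y*X)) b rfl
      rw [sub_eq_zero] at h
      rw [h, smul_smul, inv_mul_cancel₀ hb, one_smul, sub_self])

def invEquiv (a b c : ℂ) (ha : a ≠ 0) (hb : b ≠ 0) (hc : c ≠ 0) :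
    QuadAlg (Y*Z - a • (Z*Y)) (Z*X - b • (X*Z)) (X*Y - c • (Y*X)) ≃ₐ[ℂ]
    QuadAlg (Y*Z - a⁻¹ • (Z*Y)) (Z*X - c⁻¹ • (X*Z)) (X*Y - b⁻¹ • (Y*X)) :=
  AlgEquiv.ofAlgHom (invHom a b c ha hb hc) (invInvHom a b c ha hb hc)
    (by
      refine RingQuot.ringQuot_ext' (S := ℂ) _ _ ?_
      refine FreeAlgebra.hom_ext ?_
      funext i
      fin_cases i <;> simp [invHom, invInvHom, show FreeAlgebra.ι ℂ (⟨0, by omega⟩ : Fin 3) = X from rfl, show FreeAlgebra.ι ℂ (⟨1, by omega⟩ : Fin 3) = Y from rfl, show FreeAlgebra.ι ℂ (⟨2, by omega⟩ : Fin 3) = Z from rfl] <;> rfl)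
    (by
      refine RingQuot.ringQuot_ext' (S := ℂ) _ _ ?_
      refine FreeAlgebra.hom_ext ?_
      funext i
      fin_cases i <;> simp [invHom, invInvHom, show FreeAlgebra.ι ℂ (⟨0, by omega⟩ : Fin 3) = X from rfl, show FreeAlgebra.ι ℂ (⟨1, by omega⟩ : Fin 3) = Y from rfl, show FreeAlgebra.ι ℂ (⟨2, by omega⟩ : Fin 3) = Z from rfl] <;> rfl)

end equivs

lemma GrIso.trans' {f₁ f₂ f₃ g₁ g₂ g₃ h₁ h₂ h₃ : F3}
    (h : GrIso f₁ f₂ f₃ g₁ g₂ g₃) (h' : GrIso g₁ g₂ g₃ h₁ h₂ h₃) :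
    GrIso f₁ f₂ f₃ h₁ h₂ h₃ := by
  obtain ⟨e1, m1⟩ := h
  obtain ⟨e2, m2⟩ := h'
  refine ⟨e1.trans e2, ?_⟩
  have : (e1.trans e2).toLinearMap = e2.toLinearMap ∘ₗ e1.toLinearMap := rfl
  rw [this, Submodule.map_comp, m1, m2]

lemma map_genSpan_perm {f₁ f₂ f₃ g₁ g₂ g₃ : F3}
    (e : QuadAlg f₁ f₂ f₃ ≃ₐ[ℂ] QuadAlg g₁ g₂ g₃)
    (hx hy hz : QuadAlg g₁ g₂ g₃)
    (h1 : e (mk (rel3 f₁ f₂ f₃) X) = hx)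
    (h2 : e (mk (rel3 f₁ f₂ f₃) Y) = hy)
    (h3 : e (mk (rel3 f₁ f₂ f₃) Z) = hz)
    (hset : ({hx, hy, hz} : Set (QuadAlg g₁ g₂ g₃))
      = {mk (rel3 g₁ g₂ g₃) X, mk (rel3 g₁ g₂ g₃) Y, mk (rel3 g₁ g₂ g₃) Z}) :
    Submodule.map e.toLinearMap (genSpan f₁ f₂ f₃) = genSpan g₁ g₂ g₃ := by
  rw [genSpan, genSpan, Submodule.map_span]
  congr 1
  rw [Set.image_insert_eq, Set.image_insert_eq, Set.image_singleton]
  simpa [h1, h2, h3] using hset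

-- GrIso instances

lemma grIso_cyc (a b c : ℂ) :
    GrIso (Y*Z - a • (Z*Y)) (Z*X - b • (X*Z)) (X*Y - c • (Y*X))
          (Y*Z - b • (Z*Y)) (Z*X - c • (X*Z)) (X*Y - a • (Y*X)) := by
  refine ⟨cycEquiv a b c, map_genSpan_perm _
    (mk (rel3 (Y*Z - b • (Z*Y)) (Z*X - c • (X*Z)) (X*Y - a • (Y*X))) Z)
    (mk (rel3 (Y*Z - b • (Z*Y)) (Z*X - c • (X*Z)) (X*Y - a • (Y*X))) X)
    (mk (rel3 (Y*Z - b • (Z*Y)) (Z*X - c • (X*Z)) (X*Y - a • (Y*X))) Y) ?_ ?_ ?_ ?_⟩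
  · simp [cycEquiv, cycHom]
  · simp [cycEquiv, cycHom]
  · simp [cycEquiv, cycHom]
  · ext u; simp [Set.mem_insert_iff]; tauto

lemma grIso_inv (a b c : ℂ) (ha : a ≠ 0) (hb : b ≠ 0) (hc : c ≠ 0) :
    GrIso (Y*Z - a • (Z*Y)) (Z*X - b • (X*Z)) (X*Y - c • (Y*X))
          (Y*Z - a⁻¹ • (Z*Y)) (Z*X - c⁻¹ • (X*Z)) (X*Y - b⁻¹ • (Y*X)) := by
  refine ⟨invEquiv a b c ha hb hc, map_genSpan_perm _
    (mk (rel3 (Y*Z - a⁻¹ • (Z*Y)) (Z*X - c⁻¹ • (X*Z)) (X*Y - b⁻¹ • (Y*X))) X)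
    (mk (rel3 (Y*Z - a⁻¹ • (Z*Y)) (Z*X - c⁻¹ • (X*Z)) (X*Y - b⁻¹ • (Y*X))) Z)
    (mk (rel3 (Y*Z - a⁻¹ • (Z*Y)) (Z*X - c⁻¹ • (X*Z)) (X*Y - b⁻¹ • (Y*X))) Y) ?_ ?_ ?_ ?_⟩
  · simp [invEquiv, invHom]
  · simp [invEquiv, invHom]
  · simp [invEquiv, invHom]
  · ext u; simp [Set.mem_insert_iff]; tauto

-- scalar classification machinery

lemma tri3 {p q r : ℂ} (h1 : p*q = 0) (h2 : q*r = 0) (h3 : r*p = 0)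
    (h4 : ¬(p = 0 ∧ q = 0 ∧ r = 0)) :
    (q = 0 ∧ r = 0 ∧ p ≠ 0) ∨ (p = 0 ∧ r = 0 ∧ q ≠ 0) ∨ (p = 0 ∧ q = 0 ∧ r ≠ 0) := by
  rcases mul_eq_zero.mp h1 with h | h <;> rcases mul_eq_zero.mp h2 with h' | h' <;>
    rcases mul_eq_zero.mp h3 with h'' | h'' <;> tauto

lemma eqz {s t u v : ℂ} (h : (s - t)*(u*v) = 0) (hu : u ≠ 0) (hv : v ≠ 0) : s = t := by
  rcases mul_eq_zero.mp h with h | h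
  · linear_combination h
  · exact absurd h (mul_ne_zero hu hv)

lemma eqo {s t u v : ℂ} (h : (1 - s*t)*(u*v) = 0) (hu : u ≠ 0) (hv : v ≠ 0) : t = s⁻¹ := by
  rcases mul_eq_zero.mp h with h | h
  · exact (inv_eq_of_mul_eq_one_right (by linear_combination -h)).symm
  · exact absurd h (mul_ne_zero hu hv)

lemma rowz1 (ε ζ η α' β' γ' x1 x2 x3 y1 y2 y3 z1 z2 z3 : ℂ)
    (hprod : ε*ζ*η ≠ 1)
    (hdet : x1*(y2*z3 - y3*z2) - y1*(x2*z3 - x3*z2) + z1*(x2*y3 - x3*y2) ≠ 0)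
    (D1 : x1*y1*(1-ε) = 0) (D2 : y1*z1*(1-ζ) = 0) (D3 : z1*x1*(1-η) = 0)
    (Cyz12 : (γ'-ζ)*(y1*z2) + (1-ζ*γ')*(y2*z1) = 0)
    (Cyz13 : (1-ζ*β')*(y1*z3) + (β'-ζ)*(y3*z1) = 0)
    (Czx12 : (γ'-η)*(z1*x2) + (1-η*γ')*(z2*x1) = 0)
    (Czx13 : (1-η*β')*(z1*x3) + (β'-η)*(z3*x1) = 0) :
    x1*y1 = 0 := by
  by_contra hxy
  have hx1 : x1 ≠ 0 := left_ne_zero_of_mul hxy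
  have hy1 : y1 ≠ 0 := right_ne_zero_of_mul hxy
  have hε : ε = 1 := by
    rcases mul_eq_zero.mp D1 with h | h
    · exact absurd h hxy
    · linear_combination -h
  have hz1 : z1 = 0 := by
    by_contra hz1
    have hζ : ζ = 1 := by
      rcases mul_eq_zero.mp D2 with h | h
      · exact absurd h (mul_ne_zero hy1 hz1)
      · linear_combination -h
    have hη : η = 1 := by
      rcases mul_eq_zero.mp D3 with h | h
      · exact absurd h (mul_ne_zero hz1 hx1)
      · linear_combination -h
    exact hprod (by rw [hε, hζ, hη]; ring)
  have hz23 : z2 ≠ 0 ∨ z3 ≠ 0 := by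
    by_contra h
    push_neg at h
    exact hdet (by rw [hz1, h.1, h.2]; ring)
  rcases hz23 with hz2 | hz3
  · have e1 : γ' = ζ := by
      have h : (γ'-ζ)*(y1*z2) = 0 := by linear_combination Cyz12 - (1-ζ*γ')*y2*hz1
      exact eqz h hy1 hz2
    have e2 : η*γ' = 1 := by
      have h : (1-η*γ')*(z2*x1) = 0 := by linear_combination Czx12 - (γ'-η)*x2*hz1
      rcases mul_eq_zero.mp h with h | h
      · linear_combination -h
      · exact absurd h (mul_ne_zero hz2 hx1)
    exact hprod (by rw [hε, ← e1]; linear_combination e2)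
  · have e1 : β' = η := by
      have h : (β'-η)*(z3*x1) = 0 := by linear_combination Czx13 - (1-η*β')*x3*hz1
      exact eqz h hz3 hx1
    have e2 : ζ*β' = 1 := by
      have h : (1-ζ*β')*(y1*z3) = 0 := by linear_combination Cyz13 - (β'-ζ)*y3*hz1
      rcases mul_eq_zero.mp h with h | h
      · linear_combination -h
      · exact absurd h (mul_ne_zero hy1 hz3)
    exact hprod (by rw [hε, ← e1]; linear_combination e2)

lemma rowz2 (ε ζ η α' β' γ' x1 x2 x3 y1 y2 y3 z1 z2 z3 : ℂ)
    (hprod : ε*ζ*η ≠ 1)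
    (hdet : x1*(y2*z3 - y3*z2) - y1*(x2*z3 - x3*z2) + z1*(x2*y3 - x3*y2) ≠ 0)
    (D1 : x2*y2*(1-ε) = 0) (D2 : y2*z2*(1-ζ) = 0) (D3 : z2*x2*(1-η) = 0)
    (Cyz12 : (γ'-ζ)*(y1*z2) + (1-ζ*γ')*(y2*z1) = 0)
    (Cyz23 : (α'-ζ)*(y2*z3) + (1-ζ*α')*(y3*z2) = 0)
    (Czx12 : (γ'-η)*(z1*x2) + (1-η*γ')*(z2*x1) = 0)
    (Czx23 : (α'-η)*(z2*x3) + (1-η*α')*(z3*x2) = 0) :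
    x2*y2 = 0 := by
  by_contra hxy
  have hx2 : x2 ≠ 0 := left_ne_zero_of_mul hxy
  have hy2 : y2 ≠ 0 := right_ne_zero_of_mul hxy
  have hε : ε = 1 := by
    rcases mul_eq_zero.mp D1 with h | h
    · exact absurd h hxy
    · linear_combination -h
  have hz2 : z2 = 0 := by
    by_contra hz2
    have hζ : ζ = 1 := by
      rcases mul_eq_zero.mp D2 with h | h
      · exact absurd h (mul_ne_zero hy2 hz2)
      · linear_combination -h
    have hη : η = 1 := by
      rcases mul_eq_zero.mp D3 with h | h
      · exact absurd h (mul_ne_zero hz2 hx2)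
      · linear_combination -h
    exact hprod (by rw [hε, hζ, hη]; ring)
  have hz13 : z1 ≠ 0 ∨ z3 ≠ 0 := by
    by_contra h
    push_neg at h
    exact hdet (by rw [hz2, h.1, h.2]; ring)
  rcases hz13 with hz1 | hz3
  · have e1 : γ' = η := by
      have h : (γ'-η)*(z1*x2) = 0 := by linear_combination Czx12 - (1-η*γ')*x1*hz2
      exact eqz h hz1 hx2
    have e2 : ζ*γ' = 1 := by
      have h : (1-ζ*γ')*(y2*z1) = 0 := by linear_combination Cyz12 - (γ'-ζ)*y1*hz2
      rcases mul_eq_zero.mp h with h | h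
      · linear_combination -h
      · exact absurd h (mul_ne_zero hy2 hz1)
    exact hprod (by rw [hε, ← e1]; linear_combination e2)
  · have e1 : α' = ζ := by
      have h : (α'-ζ)*(y2*z3) = 0 := by linear_combination Cyz23 - (1-ζ*α')*y3*hz2
      exact eqz h hy2 hz3
    have e2 : η*α' = 1 := by
      have h : (1-η*α')*(z3*x2) = 0 := by linear_combination Czx23 - (α'-η)*x3*hz2
      rcases mul_eq_zero.mp h with h | h
      · linear_combination -h
      · exact absurd h (mul_ne_zero hz3 hx2)
    exact hprod (by rw [hε, ← e1]; linear_combination e2)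

lemma rowz3 (ε ζ η α' β' γ' x1 x2 x3 y1 y2 y3 z1 z2 z3 : ℂ)
    (hprod : ε*ζ*η ≠ 1)
    (hdet : x1*(y2*z3 - y3*z2) - y1*(x2*z3 - x3*z2) + z1*(x2*y3 - x3*y2) ≠ 0)
    (D1 : x3*y3*(1-ε) = 0) (D2 : y3*z3*(1-ζ) = 0) (D3 : z3*x3*(1-η) = 0)
    (Cyz13 : (1-ζ*β')*(y1*z3) + (β'-ζ)*(y3*z1) = 0)
    (Cyz23 : (α'-ζ)*(y2*z3) + (1-ζ*α')*(y3*z2) = 0)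
    (Czx13 : (1-η*β')*(z1*x3) + (β'-η)*(z3*x1) = 0)
    (Czx23 : (α'-η)*(z2*x3) + (1-η*α')*(z3*x2) = 0) :
    x3*y3 = 0 := by
  by_contra hxy
  have hx3 : x3 ≠ 0 := left_ne_zero_of_mul hxy
  have hy3 : y3 ≠ 0 := right_ne_zero_of_mul hxy
  have hε : ε = 1 := by
    rcases mul_eq_zero.mp D1 with h | h
    · exact absurd h hxy
    · linear_combination -h
  have hz3 : z3 = 0 := by
    by_contra hz3
    have hζ : ζ = 1 := by
      rcases mul_eq_zero.mp D2 with h | h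
      · exact absurd h (mul_ne_zero hy3 hz3)
      · linear_combination -h
    have hη : η = 1 := by
      rcases mul_eq_zero.mp D3 with h | h
      · exact absurd h (mul_ne_zero hz3 hx3)
      · linear_combination -h
    exact hprod (by rw [hε, hζ, hη]; ring)
  have hz12 : z1 ≠ 0 ∨ z2 ≠ 0 := by
    by_contra h
    push_neg at h
    exact hdet (by rw [hz3, h.1, h.2]; ring)
  rcases hz12 with hz1 | hz2
  · have e1 : β' = ζ := by
      have h : (β'-ζ)*(y3*z1) = 0 := by linear_combination Cyz13 - (1-ζ*β')*y1*hz3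
      exact eqz h hy3 hz1
    have e2 : η*β' = 1 := by
      have h : (1-η*β')*(z1*x3) = 0 := by linear_combination Czx13 - (β'-η)*x1*hz3
      rcases mul_eq_zero.mp h with h | h
      · linear_combination -h
      · exact absurd h (mul_ne_zero hz1 hx3)
    exact hprod (by rw [hε, ← e1]; linear_combination e2)
  · have e1 : α' = η := by
      have h : (α'-η)*(z2*x3) = 0 := by linear_combination Czx23 - (1-η*α')*x2*hz3
      exact eqz h hz2 hx3
    have e2 : ζ*α' = 1 := by
      have h : (1-ζ*α')*(y3*z2) = 0 := by linear_combination Cyz23 - (α'-ζ)*y2*hz3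
      rcases mul_eq_zero.mp h with h | h
      · linear_combination -h
      · exact absurd h (mul_ne_zero hy3 hz2)
    exact hprod (by rw [hε, ← e1]; linear_combination e2)

lemma classify (α β γ α' β' γ' : ℂ)
    (h1 : α*β*γ ≠ 1) (hα' : α' ≠ 0) (hβ' : β' ≠ 0) (hγ' : γ' ≠ 0)
    (p1 p2 p3 q1 q2 q3 r1 r2 r3 : ℂ)
    (hdet : p1*(q2*r3 - q3*r2) - q1*(p2*r3 - p3*r2) + r1*(p2*q3 - p3*q2) ≠ 0)
    (W1_11 : q1*r1 - α*(r1*q1) = 0)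
    (W1_22 : q2*r2 - α*(r2*q2) = 0)
    (W1_33 : q3*r3 - α*(r3*q3) = 0)
    (W1_12 : (q1*r2 - α*(r1*q2)) + γ'⁻¹*(q2*r1 - α*(r2*q1)) = 0)
    (W1_13 : (q1*r3 - α*(r1*q3)) + β'*(q3*r1 - α*(r3*q1)) = 0)
    (W1_23 : (q2*r3 - α*(r2*q3)) + α'⁻¹*(q3*r2 - α*(r3*q2)) = 0)
    (W2_11 : r1*p1 - β*(p1*r1) = 0)
    (W2_22 : r2*p2 - β*(p2*r2) = 0)
    (W2_33 : r3*p3 - β*(p3*r3) = 0)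
    (W2_12 : (r1*p2 - β*(p1*r2)) + γ'⁻¹*(r2*p1 - β*(p2*r1)) = 0)
    (W2_13 : (r1*p3 - β*(p1*r3)) + β'*(r3*p1 - β*(p3*r1)) = 0)
    (W2_23 : (r2*p3 - β*(p2*r3)) + α'⁻¹*(r3*p2 - β*(p3*r2)) = 0)
    (W3_11 : p1*q1 - γ*(q1*p1) = 0)
    (W3_22 : p2*q2 - γ*(q2*p2) = 0)
    (W3_33 : p3*q3 - γ*(q3*p3) = 0)
    (W3_12 : (p1*q2 - γ*(q1*p2)) + γ'⁻¹*(p2*q1 - γ*(q2*p1)) = 0)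
    (W3_13 : (p1*q3 - γ*(q1*p3)) + β'*(p3*q1 - γ*(q3*p1)) = 0)
    (W3_23 : (p2*q3 - γ*(q2*p3)) + α'⁻¹*(p3*q2 - γ*(q3*p2)) = 0)
    :
    ((α' = α ∧ β' = β ∧ γ' = γ) ∨
      (α' = β ∧ β' = γ ∧ γ' = α) ∨
      (α' = γ ∧ β' = α ∧ γ' = β) ∨
      (α' = α⁻¹ ∧ β' = γ⁻¹ ∧ γ' = β⁻¹) ∨
      (α' = β⁻¹ ∧ β' = α⁻¹ ∧ γ' = γ⁻¹) ∨
      (α' = γ⁻¹ ∧ β' = β⁻¹ ∧ γ' = α⁻¹)) := by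
  have D1_1 : q1*r1*(1-α) = 0 := by linear_combination W1_11
  have D1_2 : q2*r2*(1-α) = 0 := by linear_combination W1_22
  have D1_3 : q3*r3*(1-α) = 0 := by linear_combination W1_33
  have C1_12 : (γ'-α)*(q1*r2) + (1-α*γ')*(q2*r1) = 0 := by
    linear_combination γ' * W1_12 - (q2*r1 - α*(q1*r2)) * mul_inv_cancel₀ hγ'
  have C1_13 : (1-α*β')*(q1*r3) + (β'-α)*(q3*r1) = 0 := by linear_combination W1_13
  have C1_23 : (α'-α)*(q2*r3) + (1-α*α')*(q3*r2) = 0 := by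
    linear_combination α' * W1_23 - (q3*r2 - α*(q2*r3)) * mul_inv_cancel₀ hα'
  have D2_1 : r1*p1*(1-β) = 0 := by linear_combination W2_11
  have D2_2 : r2*p2*(1-β) = 0 := by linear_combination W2_22
  have D2_3 : r3*p3*(1-β) = 0 := by linear_combination W2_33
  have C2_12 : (γ'-β)*(r1*p2) + (1-β*γ')*(r2*p1) = 0 := by
    linear_combination γ' * W2_12 - (r2*p1 - β*(r1*p2)) * mul_inv_cancel₀ hγ'
  have C2_13 : (1-β*β')*(r1*p3) + (β'-β)*(r3*p1) = 0 := by linear_combination W2_13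
  have C2_23 : (α'-β)*(r2*p3) + (1-β*α')*(r3*p2) = 0 := by
    linear_combination α' * W2_23 - (r3*p2 - β*(r2*p3)) * mul_inv_cancel₀ hα'
  have D3_1 : p1*q1*(1-γ) = 0 := by linear_combination W3_11
  have D3_2 : p2*q2*(1-γ) = 0 := by linear_combination W3_22
  have D3_3 : p3*q3*(1-γ) = 0 := by linear_combination W3_33
  have C3_12 : (γ'-γ)*(p1*q2) + (1-γ*γ')*(p2*q1) = 0 := by
    linear_combination γ' * W3_12 - (p2*q1 - γ*(p1*q2)) * mul_inv_cancel₀ hγ'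
  have C3_13 : (1-γ*β')*(p1*q3) + (β'-γ)*(p3*q1) = 0 := by linear_combination W3_13
  have C3_23 : (α'-γ)*(p2*q3) + (1-γ*α')*(p3*q2) = 0 := by
    linear_combination α' * W3_23 - (p3*q2 - γ*(p2*q3)) * mul_inv_cancel₀ hα'
  have hdetQ : q1*(r2*p3 - r3*p2) - r1*(q2*p3 - q3*p2) + p1*(q2*r3 - q3*r2) ≠ 0 :=
    fun h => hdet (by linear_combination h)
  have hdetR : r1*(p2*q3 - p3*q2) - p1*(r2*q3 - r3*q2) + q1*(r2*p3 - r3*p2) ≠ 0 :=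
    fun h => hdet (by linear_combination h)
  have hprodR : β*γ*α ≠ 1 := fun h => h1 (by linear_combination h)
  have hprodP : γ*α*β ≠ 1 := fun h => h1 (by linear_combination h)
  have QR1 : q1*r1 = 0 := rowz1 α β γ α' β' γ' q1 q2 q3 r1 r2 r3 p1 p2 p3 h1 hdetQ D1_1 D2_1 D3_1 C2_12 C2_13 C3_12 C3_13
  have QR2 : q2*r2 = 0 := rowz2 α β γ α' β' γ' q1 q2 q3 r1 r2 r3 p1 p2 p3 h1 hdetQ D1_2 D2_2 D3_2 C2_12 C2_23 C3_12 C3_23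
  have QR3 : q3*r3 = 0 := rowz3 α β γ α' β' γ' q1 q2 q3 r1 r2 r3 p1 p2 p3 h1 hdetQ D1_3 D2_3 D3_3 C2_13 C2_23 C3_13 C3_23
  have RP1 : r1*p1 = 0 := rowz1 β γ α α' β' γ' r1 r2 r3 p1 p2 p3 q1 q2 q3 hprodR hdetR D2_1 D3_1 D1_1 C3_12 C3_13 C1_12 C1_13
  have RP2 : r2*p2 = 0 := rowz2 β γ α α' β' γ' r1 r2 r3 p1 p2 p3 q1 q2 q3 hprodR hdetR D2_2 D3_2 D1_2 C3_12 C3_23 C1_12 C1_23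
  have RP3 : r3*p3 = 0 := rowz3 β γ α α' β' γ' r1 r2 r3 p1 p2 p3 q1 q2 q3 hprodR hdetR D2_3 D3_3 D1_3 C3_13 C3_23 C1_13 C1_23
  have PQ1 : p1*q1 = 0 := rowz1 γ α β α' β' γ' p1 p2 p3 q1 q2 q3 r1 r2 r3 hprodP hdet D3_1 D1_1 D2_1 C1_12 C1_13 C2_12 C2_13
  have PQ2 : p2*q2 = 0 := rowz2 γ α β α' β' γ' p1 p2 p3 q1 q2 q3 r1 r2 r3 hprodP hdet D3_2 D1_2 D2_2 C1_12 C1_23 C2_12 C2_23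
  have PQ3 : p3*q3 = 0 := rowz3 γ α β α' β' γ' p1 p2 p3 q1 q2 q3 r1 r2 r3 hprodP hdet D3_3 D1_3 D2_3 C1_13 C1_23 C2_13 C2_23
  have NA1 : ¬(p1 = 0 ∧ q1 = 0 ∧ r1 = 0) := fun h => hdet (by rw [h.1, h.2.1, h.2.2]; ring)
  have T1 := tri3 PQ1 QR1 RP1 NA1
  have NA2 : ¬(p2 = 0 ∧ q2 = 0 ∧ r2 = 0) := fun h => hdet (by rw [h.1, h.2.1, h.2.2]; ring)
  have T2 := tri3 PQ2 QR2 RP2 NA2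
  have NA3 : ¬(p3 = 0 ∧ q3 = 0 ∧ r3 = 0) := fun h => hdet (by rw [h.1, h.2.1, h.2.2]; ring)
  have T3 := tri3 PQ3 QR3 RP3 NA3
  rcases T1 with ⟨hq1, hr1, hp1⟩ | ⟨hp1, hr1, hq1⟩ | ⟨hp1, hq1, hr1⟩
  · -- row1 P
    rcases T2 with ⟨hq2, hr2, hp2⟩ | ⟨hp2, hr2, hq2⟩ | ⟨hp2, hq2, hr2⟩
    · rcases T3 with ⟨hq3, hr3, hp3⟩ | ⟨hp3, hr3, hq3⟩ | ⟨hp3, hq3, hr3⟩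
      · exact absurd (by rw [hq1, hr1, hq2, hr2, hq3, hr3]; ring) hdet
      · exact absurd (by rw [hq1, hr1, hq2, hr2, hp3, hr3]; ring) hdet
      · exact absurd (by rw [hq1, hr1, hq2, hr2, hp3, hq3]; ring) hdet
    · rcases T3 with ⟨hq3, hr3, hp3⟩ | ⟨hp3, hr3, hq3⟩ | ⟨hp3, hq3, hr3⟩
      · exact absurd (by rw [hq1, hr1, hp2, hr2, hq3, hr3]; ring) hdet
      · exact absurd (by rw [hq1, hr1, hp2, hr2, hp3, hr3]; ring) hdet
      · exact Or.inl ⟨eqz (by linear_combination C1_23 - (1-α*α')*r2*hq3) hq2 hr3,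
          eqz (by linear_combination C2_13 - (1-β*β')*p3*hr1) hr3 hp1,
          eqz (by linear_combination C3_12 - (1-γ*γ')*q1*hp2) hp1 hq2⟩
    · rcases T3 with ⟨hq3, hr3, hp3⟩ | ⟨hp3, hr3, hq3⟩ | ⟨hp3, hq3, hr3⟩
      · exact absurd (by rw [hq1, hr1, hp2, hq2, hq3, hr3]; ring) hdet
      · exact Or.inr (Or.inr (Or.inr (Or.inl ⟨eqo (by linear_combination C1_23 - (α'-α)*r3*hq2) hq3 hr2,
          eqo (by linear_combination C3_13 - (β'-γ)*q1*hp3) hp1 hq3,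
          eqo (by linear_combination C2_12 - (γ'-β)*p2*hr1) hr2 hp1⟩)))
      · exact absurd (by rw [hq1, hr1, hp2, hq2, hp3, hq3]; ring) hdet
  · -- row1 Q
    rcases T2 with ⟨hq2, hr2, hp2⟩ | ⟨hp2, hr2, hq2⟩ | ⟨hp2, hq2, hr2⟩
    · rcases T3 with ⟨hq3, hr3, hp3⟩ | ⟨hp3, hr3, hq3⟩ | ⟨hp3, hq3, hr3⟩
      · exact absurd (by rw [hp1, hr1, hq2, hr2, hq3, hr3]; ring) hdet
      · exact absurd (by rw [hp1, hr1, hq2, hr2, hp3, hr3]; ring) hdet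
      · exact Or.inr (Or.inr (Or.inr (Or.inr (Or.inl ⟨eqo (by linear_combination C2_23 - (α'-β)*p3*hr2) hr3 hp2,
          eqo (by linear_combination C1_13 - (β'-α)*r1*hq3) hq1 hr3,
          eqo (by linear_combination C3_12 - (γ'-γ)*q2*hp1) hp2 hq1⟩))))
    · rcases T3 with ⟨hq3, hr3, hp3⟩ | ⟨hp3, hr3, hq3⟩ | ⟨hp3, hq3, hr3⟩
      · exact absurd (by rw [hp1, hr1, hp2, hr2, hq3, hr3]; ring) hdet
      · exact absurd (by rw [hp1, hr1, hp2, hr2, hp3, hr3]; ring) hdet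
      · exact absurd (by rw [hp1, hr1, hp2, hr2, hp3, hq3]; ring) hdet
    · rcases T3 with ⟨hq3, hr3, hp3⟩ | ⟨hp3, hr3, hq3⟩ | ⟨hp3, hq3, hr3⟩
      · exact Or.inr (Or.inl ⟨eqz (by linear_combination C2_23 - (1-β*α')*p2*hr3) hr2 hp3,
          eqz (by linear_combination C3_13 - (1-γ*β')*q3*hp1) hp3 hq1,
          eqz (by linear_combination C1_12 - (1-α*γ')*r1*hq2) hq1 hr2⟩)
      · exact absurd (by rw [hp1, hr1, hp2, hq2, hp3, hr3]; ring) hdet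
      · exact absurd (by rw [hp1, hr1, hp2, hq2, hp3, hq3]; ring) hdet
  · -- row1 R
    rcases T2 with ⟨hq2, hr2, hp2⟩ | ⟨hp2, hr2, hq2⟩ | ⟨hp2, hq2, hr2⟩
    · rcases T3 with ⟨hq3, hr3, hp3⟩ | ⟨hp3, hr3, hq3⟩ | ⟨hp3, hq3, hr3⟩
      · exact absurd (by rw [hp1, hq1, hq2, hr2, hq3, hr3]; ring) hdet
      · exact Or.inr (Or.inr (Or.inl ⟨eqz (by linear_combination C3_23 - (1-γ*α')*p3*hq2) hp2 hq3,
          eqz (by linear_combination C1_13 - (1-α*β')*r3*hq1) hq3 hr1,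
          eqz (by linear_combination C2_12 - (1-β*γ')*p1*hr2) hr1 hp2⟩))
      · exact absurd (by rw [hp1, hq1, hq2, hr2, hp3, hq3]; ring) hdet
    · rcases T3 with ⟨hq3, hr3, hp3⟩ | ⟨hp3, hr3, hq3⟩ | ⟨hp3, hq3, hr3⟩
      · exact Or.inr (Or.inr (Or.inr (Or.inr (Or.inr ⟨eqo (by linear_combination C3_23 - (α'-γ)*q3*hp2) hp3 hq2,
          eqo (by linear_combination C2_13 - (β'-β)*p1*hr3) hr1 hp3,
          eqo (by linear_combination C1_12 - (γ'-α)*r2*hq1) hq2 hr1⟩))))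
      · exact absurd (by rw [hp1, hq1, hp2, hr2, hp3, hr3]; ring) hdet
      · exact absurd (by rw [hp1, hq1, hp2, hr2, hp3, hq3]; ring) hdet
    · rcases T3 with ⟨hq3, hr3, hp3⟩ | ⟨hp3, hr3, hq3⟩ | ⟨hp3, hq3, hr3⟩
      · exact absurd (by rw [hp1, hq1, hp2, hq2, hq3, hr3]; ring) hdet
      · exact absurd (by rw [hp1, hq1, hp2, hq2, hp3, hr3]; ring) hdet
      · exact absurd (by rw [hp1, hq1, hp2, hq2, hp3, hq3]; ring) hdet

theorem typeS1_iso_iff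
    (α β γ α' β' γ' : ℂ)
    (h0 : α * β * γ ≠ 0)
    (h1 : α * β * γ ≠ 1)
    (h0' : α' * β' * γ' ≠ 0)
    (h1' : α' * β' * γ' ≠ 1)
    : GrIso
      (Y*Z - α • (Z*Y))
      (Z*X - β • (X*Z))
      (X*Y - γ • (Y*X))
      (Y*Z - α' • (Z*Y))
      (Z*X - β' • (X*Z))
      (X*Y - γ' • (Y*X))
      ↔
      ((α' = α ∧ β' = β ∧ γ' = γ) ∨
        (α' = β ∧ β' = γ ∧ γ' = α) ∨
        (α' = γ ∧ β' = α ∧ γ' = β) ∨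
        (α' = α⁻¹ ∧ β' = γ⁻¹ ∧ γ' = β⁻¹) ∨
        (α' = β⁻¹ ∧ β' = α⁻¹ ∧ γ' = γ⁻¹) ∨
        (α' = γ⁻¹ ∧ β' = β⁻¹ ∧ γ' = α⁻¹)) := by
  have hα : α ≠ 0 := left_ne_zero_of_mul (left_ne_zero_of_mul h0)
  have hβ : β ≠ 0 := right_ne_zero_of_mul (left_ne_zero_of_mul h0)
  have hγ : γ ≠ 0 := right_ne_zero_of_mul h0
  have hα' : α' ≠ 0 := left_ne_zero_of_mul (left_ne_zero_of_mul h0')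
  have hβ' : β' ≠ 0 := right_ne_zero_of_mul (left_ne_zero_of_mul h0')
  have hγ' : γ' ≠ 0 := right_ne_zero_of_mul h0'
  constructor
  · -- forward direction
    rintro ⟨e, hmap⟩
    set S := rel3 (Y*Z - α • (Z*Y)) (Z*X - β • (X*Z)) (X*Y - γ • (Y*X)) with hS
    set T := rel3 (Y*Z - α' • (Z*Y)) (Z*X - β' • (X*Z)) (X*Y - γ' • (Y*X)) with hT
    -- coefficients of the images of the generators
    have hmemX : e (mk S X) ∈ genSpan (Y*Z - α' • (Z*Y)) (Z*X - β' • (X*Z)) (X*Y - γ' • (Y*X)) := by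
      rw [← hmap]
      exact ⟨mk S X, Submodule.subset_span (by left; rfl), rfl⟩
    have hmemY : e (mk S Y) ∈ genSpan (Y*Z - α' • (Z*Y)) (Z*X - β' • (X*Z)) (X*Y - γ' • (Y*X)) := by
      rw [← hmap]
      exact ⟨mk S Y, Submodule.subset_span (by right; left; rfl), rfl⟩
    have hmemZ : e (mk S Z) ∈ genSpan (Y*Z - α' • (Z*Y)) (Z*X - β' • (X*Z)) (X*Y - γ' • (Y*X)) := by
      rw [← hmap]
      exact ⟨mk S Z, Submodule.subset_span (by right; right; rfl), rfl⟩
    rw [genSpan, mem_span_triple_s5] at hmemX hmemY hmemZ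
    obtain ⟨p1, p2, p3, hp⟩ := hmemX
    obtain ⟨q1, q2, q3, hq⟩ := hmemY
    obtain ⟨r1, r2, r3, hr⟩ := hmemZ
    -- coefficients of the inverse images
    have inv_coeff : ∀ g : F3, mk T g ∈ genSpan (Y*Z - α' • (Z*Y)) (Z*X - β' • (X*Z)) (X*Y - γ' • (Y*X)) →
        ∃ n1 n2 n3 : ℂ,
          n1 • e (mk S X) + n2 • e (mk S Y) + n3 • e (mk S Z) = mk T g := by
      intro g hg
      rw [← hmap] at hg
      obtain ⟨w, hw, hwe⟩ := hg
      obtain ⟨n1, n2, n3, rfl⟩ := mem_span_triple_s5.mp hw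
      refine ⟨n1, n2, n3, ?_⟩
      simpa only [map_add, map_smul, AlgEquiv.toLinearMap_apply] using hwe
    obtain ⟨a1, a2, a3, ha⟩ := inv_coeff X (Submodule.subset_span (by left; rfl))
    obtain ⟨b1, b2, b3, hb⟩ := inv_coeff Y (Submodule.subset_span (by right; left; rfl))
    obtain ⟨c1, c2, c3, hc⟩ := inv_coeff Z (Submodule.subset_span (by right; right; rfl))
    rw [← hp, ← hq, ← hr] at ha hb hc
    have keyX : (p1*a1 + q1*a2 + r1*a3 - 1) • (mk T X) + (p2*a1 + q2*a2 + r2*a3) • (mk T Y)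
        + (p3*a1 + q3*a2 + r3*a3) • (mk T Z) = 0 := by
      linear_combination (norm := module) ha
    have keyY : (p1*b1 + q1*b2 + r1*b3) • (mk T X) + (p2*b1 + q2*b2 + r2*b3 - 1) • (mk T Y)
        + (p3*b1 + q3*b2 + r3*b3) • (mk T Z) = 0 := by
      linear_combination (norm := module) hb
    have keyZ : (p1*c1 + q1*c2 + r1*c3) • (mk T X) + (p2*c1 + q2*c2 + r2*c3) • (mk T Y)
        + (p3*c1 + q3*c2 + r3*c3 - 1) • (mk T Z) = 0 := by
      linear_combination (norm := module) hc
    obtain ⟨mx1, mx2, mx3⟩ := ext3 hα' hβ' hγ' _ _ _ keyX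
    obtain ⟨my1, my2, my3⟩ := ext3 hα' hβ' hγ' _ _ _ keyY
    obtain ⟨mz1, mz2, mz3⟩ := ext3 hα' hβ' hγ' _ _ _ keyZ
    -- determinant is nonzero
    have hdet : p1*(q2*r3 - q3*r2) - q1*(p2*r3 - p3*r2) + r1*(p2*q3 - p3*q2) ≠ 0 := by
      intro h
      set Mm : Matrix (Fin 3) (Fin 3) ℂ := !![p1,q1,r1; p2,q2,r2; p3,q3,r3] with hMm
      set Nm : Matrix (Fin 3) (Fin 3) ℂ := !![a1,b1,c1; a2,b2,c2; a3,b3,c3] with hNm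
      have hMN : Mm * Nm = 1 := by
        ext i j
        fin_cases i <;> fin_cases j <;>
          simp [hMm, hNm, Matrix.mul_apply, Fin.sum_univ_three, Matrix.one_apply] <;>
          first
          | linear_combination mx1 | linear_combination mx2 | linear_combination mx3
          | linear_combination my1 | linear_combination my2 | linear_combination my3
          | linear_combination mz1 | linear_combination mz2 | linear_combination mz3
      have hdd : Mm.det * Nm.det = 1 := by rw [← Matrix.det_mul, hMN, Matrix.det_one]
      have hz : Mm.det = 0 := by
        rw [hMm]
        simp [Matrix.det_fin_three]
        linear_combination h
      rw [hz, zero_mul] at hdd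
      exact zero_ne_one hdd
    -- relator equations
    have hrel1 := qrel1 (f₁ := Y*Z - α • (Z*Y)) (Z*X - β • (X*Z)) (X*Y - γ • (Y*X)) α rfl
    have hrel2 := qrel2 (f₂ := Z*X - β • (X*Z)) (Y*Z - α • (Z*Y)) (X*Y - γ • (Y*X)) β rfl
    have hrel3 := qrel3 (f₃ := X*Y - γ • (Y*X)) (Y*Z - α • (Z*Y)) (Z*X - β • (X*Z)) γ rfl
    rw [← hS] at hrel1 hrel2 hrel3
    have he1 := congrArg e hrel1
    have he2 := congrArg e hrel2
    have he3 := congrArg e hrel3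
    simp only [map_sub, map_mul, map_smul, map_zero] at he1 he2 he3
    rw [← hq, ← hr] at he1
    rw [← hr, ← hp] at he2
    rw [← hp, ← hq] at he3
    simp only [add_mul, mul_add, smul_mul_assoc, mul_smul_comm, smul_smul, smul_add, smul_sub] at he1 he2 he3
    have key1 : (q1*r1 - α*(r1*q1)) • ((mk T X) * (mk T X))
        + (q1*r2 - α*(r1*q2)) • ((mk T X) * (mk T Y))
        + (q1*r3 - α*(r1*q3)) • ((mk T X) * (mk T Z))
        + (q2*r1 - α*(r2*q1)) • ((mk T Y) * (mk T X))
        + (q2*r2 - α*(r2*q2)) • ((mk T Y) * (mk T Y))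
        + (q2*r3 - α*(r2*q3)) • ((mk T Y) * (mk T Z))
        + (q3*r1 - α*(r3*q1)) • ((mk T Z) * (mk T X))
        + (q3*r2 - α*(r3*q2)) • ((mk T Z) * (mk T Y))
        + (q3*r3 - α*(r3*q3)) • ((mk T Z) * (mk T Z)) = 0 := by
      linear_combination (norm := module) he1
    have key2 : (r1*p1 - β*(p1*r1)) • ((mk T X) * (mk T X))
        + (r1*p2 - β*(p1*r2)) • ((mk T X) * (mk T Y))
        + (r1*p3 - β*(p1*r3)) • ((mk T X) * (mk T Z))
        + (r2*p1 - β*(p2*r1)) • ((mk T Y) * (mk T X))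
        + (r2*p2 - β*(p2*r2)) • ((mk T Y) * (mk T Y))
        + (r2*p3 - β*(p2*r3)) • ((mk T Y) * (mk T Z))
        + (r3*p1 - β*(p3*r1)) • ((mk T Z) * (mk T X))
        + (r3*p2 - β*(p3*r2)) • ((mk T Z) * (mk T Y))
        + (r3*p3 - β*(p3*r3)) • ((mk T Z) * (mk T Z)) = 0 := by
      linear_combination (norm := module) he2
    have key3 : (p1*q1 - γ*(q1*p1)) • ((mk T X) * (mk T X))
        + (p1*q2 - γ*(q1*p2)) • ((mk T X) * (mk T Y))
        + (p1*q3 - γ*(q1*p3)) • ((mk T X) * (mk T Z))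
        + (p2*q1 - γ*(q2*p1)) • ((mk T Y) * (mk T X))
        + (p2*q2 - γ*(q2*p2)) • ((mk T Y) * (mk T Y))
        + (p2*q3 - γ*(q2*p3)) • ((mk T Y) * (mk T Z))
        + (p3*q1 - γ*(q3*p1)) • ((mk T Z) * (mk T X))
        + (p3*q2 - γ*(q3*p2)) • ((mk T Z) * (mk T Y))
        + (p3*q3 - γ*(q3*p3)) • ((mk T Z) * (mk T Z)) = 0 := by
      linear_combination (norm := module) he3
    obtain ⟨W1_11, W1_22, W1_33, W1_12, W1_13, W1_23⟩ := ext6 hα' hβ' hγ' _ _ _ _ _ _ _ _ _ key1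
    obtain ⟨W2_11, W2_22, W2_33, W2_12, W2_13, W2_23⟩ := ext6 hα' hβ' hγ' _ _ _ _ _ _ _ _ _ key2
    obtain ⟨W3_11, W3_22, W3_33, W3_12, W3_13, W3_23⟩ := ext6 hα' hβ' hγ' _ _ _ _ _ _ _ _ _ key3
    exact classify α β γ α' β' γ' h1 hα' hβ' hγ' p1 p2 p3 q1 q2 q3 r1 r2 r3 hdet
      W1_11 W1_22 W1_33 W1_12 W1_13 W1_23
      W2_11 W2_22 W2_33 W2_12 W2_13 W2_23
      W3_11 W3_22 W3_33 W3_12 W3_13 W3_23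
  · -- backward direction
    rintro (⟨h1', h2', h3'⟩ | ⟨h1', h2', h3'⟩ | ⟨h1', h2', h3'⟩ | ⟨h1', h2', h3'⟩ |
      ⟨h1', h2', h3'⟩ | ⟨h1', h2', h3'⟩) <;> rw [h1', h2', h3']
    · exact ⟨AlgEquiv.refl, by rw [show (AlgEquiv.refl : _ ≃ₐ[ℂ] _).toLinearMap = LinearMap.id from rfl, Submodule.map_id]⟩
    · exact grIso_cyc α β γ
    · exact GrIso.trans' (grIso_cyc α β γ) (grIso_cyc β γ α)
    · exact grIso_inv α β γ hα hβ hγ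
    · exact GrIso.trans' (grIso_cyc α β γ) (grIso_inv β γ α hβ hγ hα)
    · exact GrIso.trans' (GrIso.trans' (grIso_cyc α β γ) (grIso_cyc β γ α)) (grIso_inv γ α β hγ hα hβ)
end
end
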